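/- arXiv:1908.00526 — 6 statements merged into one kernel-verified Lean document; each statement's English description precedes it below -/
import Mathlib

section
/- For every β ∈ [0,1), the complex eigenvalues of the monodromy matrix γ_{β,0}(2π) are exactly exp(2π√(−1)·√(1−β)) and exp(−2π√(−1)·√(1−β)). In particular, for β = 3/4 one has γ_{3/4,0}(2π) = −I₂. -/
open Real Matrix

attribute [local instance] Matrix.normedAddCommGroup

noncomputable section

/-- The standard symplectic matrix `J = [[0,-1],[1,0]]`. -/
def Jmat : Matrix (Fin 2) (Fin 2) ℝ := !![0, -1; 1, 0]

/-- The coefficient matrix `B_{β,e}(t) = diag(1, 1 - β/(1 + e cos t))`. -/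
def Bmat (β e t : ℝ) : Matrix (Fin 2) (Fin 2) ℝ :=
  !![1, 0; 0, 1 - β / (1 + e * Real.cos t)]

/-- `γ` is the fundamental solution of `γ' = J B_{β,e} γ`, `γ(0) = I₂`
(derivative taken entrywise). -/
def IsFundSol (β e : ℝ) (γ : ℝ → Matrix (Fin 2) (Fin 2) ℝ) : Prop :=
  γ 0 = 1 ∧ ∀ (t : ℝ) (i j : Fin 2),
    HasDerivAt (fun s => γ s i j) ((Jmat * Bmat β e t * γ t) i j) t

/-- The trace-formula function `f(β,-1)`. -/
def fTrace (β : ℝ) : ℝ :=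
  β ^ 2 / (2 * (1 - β)) *
    ∫ s in (π / 2)..(3 * π / 2), ∫ t in (π / 2)..(3 * π / 2),
      Real.cos s * Real.cos t *
        (Real.cos (2 * π * Real.sqrt (1 - β) * (s - t)) ^ 2 /
            Real.cos (π * Real.sqrt (1 - β)) ^ 2 -
          Real.cos (4 * π * Real.sqrt (1 - β) * (s - t + 1 / 4)) /
            Real.cos (π * Real.sqrt (1 - β)))

attribute [local instance] Matrix.normedSpace

/-- The explicit solution of the constant-coefficient system. -/
def gsol (ω t : ℝ) : Matrix (Fin 2) (Fin 2) ℝ :=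
  !![Real.cos (ω * t), -ω * Real.sin (ω * t);
     Real.sin (ω * t) / ω, Real.cos (ω * t)]

lemma Amat_eq (β t : ℝ) : Jmat * Bmat β 0 t = !![0, -(1 - β); 1, 0] := by
  simp [Jmat, Bmat, Matrix.mul_fin_two]

lemma gsol_deriv (ω t : ℝ) (hω : ω ≠ 0) :
    HasDerivAt (gsol ω) (!![0, -(ω * ω); 1, 0] * gsol ω t) t := by
  have hθ : ∀ s : ℝ, HasDerivAt (fun u : ℝ => ω * u) ω s := fun s => by
    simpa using (hasDerivAt_id s).const_mul ω
  refine hasDerivAt_pi.mpr fun i => hasDerivAt_pi.mpr fun j => ?_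
  fin_cases i <;> fin_cases j <;>
    simp only [gsol, Matrix.mul_fin_two, Matrix.cons_val', Matrix.cons_val_zero,
      Matrix.cons_val_one, Matrix.head_cons, Matrix.head_fin_const, Matrix.empty_val',
      Matrix.cons_val_fin_one, Fin.isValue, Fin.mk_zero, Fin.mk_one, Matrix.of_apply]
  · refine (hθ t).cos.congr_deriv ?_; field_simp; ring
  · refine (((hθ t).sin).const_mul (-ω)).congr_deriv ?_; ring
  · refine (((hθ t).sin).div_const ω).congr_deriv ?_; field_simp; ring
  · refine (hθ t).cos.congr_deriv ?_; ring

lemma fundSol_eq (β : ℝ) (hβ : β ∈ Set.Ico (0 : ℝ) 1)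
    (γ : ℝ → Matrix (Fin 2) (Fin 2) ℝ) (hγ : IsFundSol β 0 γ) :
    γ (2 * π) = gsol (Real.sqrt (1 - β)) (2 * π) := by
  obtain ⟨hβ0, hβ1⟩ := hβ
  set ω := Real.sqrt (1 - β) with hωdef
  have h1β : (0 : ℝ) < 1 - β := by linarith
  have hω0 : 0 < ω := Real.sqrt_pos.mpr h1β
  have hω2 : ω * ω = 1 - β := Real.mul_self_sqrt h1β.le
  set A : Matrix (Fin 2) (Fin 2) ℝ := !![0, -(ω * ω); 1, 0] with hA
  have hAeq : ∀ s : ℝ, Jmat * Bmat β 0 s = A := fun s => by rw [Amat_eq, hA, hω2]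
  let L : Matrix (Fin 2) (Fin 2) ℝ →L[ℝ] Matrix (Fin 2) (Fin 2) ℝ :=
    LinearMap.toContinuousLinearMap (LinearMap.mulLeft ℝ A)
  have hγ' : ∀ s : ℝ, HasDerivAt γ (A * γ s) s := fun s => by
    rw [← hAeq s]
    exact hasDerivAt_pi.mpr fun i => hasDerivAt_pi.mpr fun j => hγ.2 s i j
  have hg' : ∀ s : ℝ, HasDerivAt (gsol ω) (A * gsol ω s) s :=
    fun s => gsol_deriv ω s hω0.ne'
  have hLapp : ∀ x : Matrix (Fin 2) (Fin 2) ℝ, L x = A * x := fun x => rfl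
  letI : SeminormedAddCommGroup (Matrix (Fin 2) (Fin 2) ℝ →L[ℝ] Matrix (Fin 2) (Fin 2) ℝ) :=
    ContinuousLinearMap.toSeminormedAddCommGroup
  have key : Set.EqOn γ (gsol ω) (Set.Icc 0 (2 * π)) := by
    refine ODE_solution_unique (v := fun _ x => L x) (K := ‖L‖₊)
      (fun _ => L.lipschitz) ?_ ?_ ?_ ?_ ?_
    · exact (continuous_iff_continuousAt.mpr fun s => (hγ' s).continuousAt).continuousOn
    · intro s _; exact (hγ' s).hasDerivWithinAt
    · exact (continuous_iff_continuousAt.mpr fun s => (hg' s).continuousAt).continuousOn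
    · intro s _; exact (hg' s).hasDerivWithinAt
    · rw [hγ.1, gsol]
      simp [Matrix.one_fin_two]
  exact key (Set.mem_Icc.mpr ⟨by positivity, le_refl _⟩)

/-- the complex eigenvalues of `γ_{β,0}(2π)` are exactly
`exp(±2πi√(1-β))`; in particular `γ_{3/4,0}(2π) = -I₂`. -/
theorem stmt_3 (β : ℝ) (hβ : β ∈ Set.Ico (0 : ℝ) 1)
    (γ : ℝ → Matrix (Fin 2) (Fin 2) ℝ) (hγ : IsFundSol β 0 γ) :
    (∀ μ : ℂ,
      Matrix.det ((γ (2 * π)).map (fun x => (x : ℂ)) - μ • 1) = 0 ↔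
        μ = Complex.exp (2 * π * Complex.I * Real.sqrt (1 - β)) ∨
        μ = Complex.exp (-(2 * π * Complex.I * Real.sqrt (1 - β)))) ∧
    (β = 3 / 4 → γ (2 * π) = -1) := by
  have hγ2π := fundSol_eq β hβ γ hγ
  obtain ⟨hβ0, hβ1⟩ := hβ
  set ω := Real.sqrt (1 - β) with hωdef
  have h1β : (0 : ℝ) < 1 - β := by linarith
  have hω0 : 0 < ω := Real.sqrt_pos.mpr h1β
  set c : ℝ := Real.cos (ω * (2 * π)) with hc
  set s : ℝ := Real.sin (ω * (2 * π)) with hs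
  constructor
  · intro μ
    have hdet : Matrix.det ((γ (2 * π)).map (fun x => (x : ℂ)) - μ • 1) =
        ((c : ℂ) + (s : ℂ) * Complex.I - μ) * ((c : ℂ) - (s : ℂ) * Complex.I - μ) := by
      rw [hγ2π, gsol]
      rw [Matrix.det_fin_two]
      simp only [Matrix.map_apply, Matrix.sub_apply, Matrix.smul_apply, Matrix.one_apply,
        Matrix.cons_val', Matrix.cons_val_zero, Matrix.cons_val_one, Matrix.head_cons,
        Matrix.head_fin_const, Matrix.empty_val', Matrix.cons_val_fin_one, Matrix.of_apply]
      rw [← hc, ← hs]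
      have hωC : (ω : ℂ) ≠ 0 := by exact_mod_cast hω0.ne'
      push_cast
      field_simp
      ring_nf
      simp only [Complex.I_sq]
      ring
    have hexp1 : Complex.exp (2 * π * Complex.I * ω) = (c : ℂ) + (s : ℂ) * Complex.I := by
      have h1 : (2 * (π : ℂ) * Complex.I * (ω : ℂ)) = ((ω * (2 * π) : ℝ) : ℂ) * Complex.I := by
        push_cast; ring
      rw [h1, Complex.exp_mul_I, hc, hs, Complex.ofReal_cos, Complex.ofReal_sin]
    have hexp2 : Complex.exp (-(2 * π * Complex.I * ω)) = (c : ℂ) - (s : ℂ) * Complex.I := by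
      have h2 : (-(2 * (π : ℂ) * Complex.I * (ω : ℂ))) = ((-(ω * (2 * π)) : ℝ) : ℂ) * Complex.I := by
        push_cast; ring
      rw [h2, Complex.exp_mul_I, Complex.ofReal_neg, Complex.cos_neg, Complex.sin_neg,
        hc, hs, Complex.ofReal_cos, Complex.ofReal_sin]
      ring
    rw [hdet, mul_eq_zero, sub_eq_zero, sub_eq_zero, hexp1, hexp2]
    constructor
    · rintro (h | h) <;> [left; right] <;> exact h.symm
    · rintro (h | h) <;> [left; right] <;> exact h.symm
  · intro hβ34
    have hωval : ω = 1 / 2 := by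
      rw [hωdef, hβ34, show (1 : ℝ) - 3 / 4 = (1 / 2) ^ 2 by norm_num,
        Real.sqrt_sq (by norm_num)]
    rw [hγ2π, gsol, hωval, show (1 / 2 : ℝ) * (2 * π) = π by ring]
    ext i j
    fin_cases i <;> fin_cases j <;>
      simp [Matrix.one_apply, Real.cos_pi, Real.sin_pi]
end
end

section
/- For every β ∈ [0,1) and e ∈ [0,1), the quadratic form Q_{β,e} restricted to the periodic space D(1,2π) has Morse index exactly 1: there exists a one-dimensional complex subspace V of D(1,2π) such that Q_{β,e}(y) < 0 for all nonzero y ∈ V, and there is no two-dimensional complex subspace W of D(1,2π) with Q_{β,e}(y) < 0 for all nonzero y ∈ W. -/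
open Real Matrix

attribute [local instance] Matrix.normedAddCommGroup

noncomputable section

/-- The quadratic form `Q_{β,e}(y) = ∫₀^{2π} (|y'|² + (β/(1+e cos t) − 1)|y|²) dt`. -/
def Qform (β e : ℝ) (y : ℝ → ℂ) : ℝ :=
  ∫ t in (0 : ℝ)..(2 * π), (‖deriv y t‖ ^ 2 + (β / (1 + e * Real.cos t) - 1) * ‖y t‖ ^ 2)

section WirtingerAux
open MeasureTheory Set intervalIntegral

local instance fact2pi : Fact ((0:ℝ) < 2 * π) := ⟨by positivity⟩

lemma liftIoc_measurable {g : ℝ → ℂ} (hm : Measurable g) :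
    Measurable (AddCircle.liftIoc (2*π) 0 g) :=
  (hm.comp measurable_subtype_coe).comp (AddCircle.measurableEquivIoc (2*π) 0).measurable

lemma integrableOn_sq {g : ℝ → ℂ}
    (hg2 : IntervalIntegrable (fun t => ‖g t‖^2) volume 0 (2*π)) :
    IntegrableOn (fun t => ‖g t‖^2) (Ioc (0:ℝ) (0 + 2*π)) volume := by
  rw [zero_add]
  exact (intervalIntegrable_iff_integrableOn_Ioc_of_le (by positivity)).mp hg2

lemma integrable_sq_lift {g : ℝ → ℂ} (hm : Measurable g)
    (hg2 : IntervalIntegrable (fun t => ‖g t‖^2) volume 0 (2*π)) :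
    Integrable (fun x => ‖AddCircle.liftIoc (2*π) 0 g x‖^2)
      (@AddCircle.haarAddCircle (2*π) _) := by
  set G := AddCircle.liftIoc (2*π) 0 g with hG
  have hGm : Measurable G := liftIoc_measurable hm
  have h1 : Integrable (fun x => ‖G x‖^2) (volume : Measure (AddCircle (2*π))) := by
    rw [← (AddCircle.measurePreserving_mk (2*π) 0).integrable_comp
      ((hGm.norm.pow_const 2).aestronglyMeasurable)]
    have heq : EqOn ((fun x => ‖G x‖^2) ∘ (↑)) (fun t : ℝ => ‖g t‖^2) (Ioc 0 (0 + 2*π)) := by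
      intro x hx
      simp only [Function.comp_apply, hG, AddCircle.liftIoc_coe_apply hx]
    exact (integrableOn_sq hg2).congr_fun heq.symm measurableSet_Ioc
  rw [AddCircle.volume_eq_smul_haarAddCircle] at h1
  exact (integrable_smul_measure (by simp [pi_pos.ne']; positivity) ENNReal.ofReal_ne_top).mp h1

lemma integral_sq_lift {g : ℝ → ℂ} (hm : Measurable g) :
    ∫ x, ‖AddCircle.liftIoc (2*π) 0 g x‖^2 ∂(@AddCircle.haarAddCircle (2*π) _)
      = (1/(2*π)) * ∫ t in (0:ℝ)..(2*π), ‖g t‖^2 := by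
  set G := AddCircle.liftIoc (2*π) 0 g with hG
  have h1 : ∫ t in (0:ℝ)..(2*π), ‖g t‖^2 = ∫ x, ‖G x‖^2 ∂(volume : Measure (AddCircle (2*π))) := by
    rw [← AddCircle.integral_preimage (2*π) 0 (fun x => ‖G x‖^2), integral_of_le (by positivity),
      show Ioc (0:ℝ) (2*π) = Ioc 0 (0+2*π) by rw [zero_add]]
    exact setIntegral_congr_fun measurableSet_Ioc fun x hx =>
      congrArg (fun z : ℂ => ‖z‖^2) (AddCircle.liftIoc_coe_apply hx).symm
  rw [h1, AddCircle.volume_eq_smul_haarAddCircle, MeasureTheory.integral_smul_measure]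
  rw [ENNReal.toReal_ofReal (by positivity)]
  simp only [smul_eq_mul]
  field_simp

lemma parseval_lift {g : ℝ → ℂ} (hm : Measurable g)
    (hg2 : IntervalIntegrable (fun t => ‖g t‖^2) volume 0 (2*π)) :
    Summable (fun n : ℤ => ‖fourierCoeff (AddCircle.liftIoc (2*π) 0 g) n‖^2) ∧
    ∑' n : ℤ, ‖fourierCoeff (AddCircle.liftIoc (2*π) 0 g) n‖^2
      = (1/(2*π)) * ∫ t in (0:ℝ)..(2*π), ‖g t‖^2 := by
  set G := AddCircle.liftIoc (2*π) 0 g with hG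
  have hGm : Measurable G := liftIoc_measurable hm
  have hmem : MemLp G 2 (@AddCircle.haarAddCircle (2*π) _) :=
    (memLp_two_iff_integrable_sq_norm hGm.aestronglyMeasurable).mpr (integrable_sq_lift hm hg2)
  set f : Lp ℂ 2 (@AddCircle.haarAddCircle (2*π) _) := hmem.toLp G with hf
  have hcoeff : ∀ n : ℤ, fourierCoeff (⇑f) n = fourierCoeff G n := by
    intro n
    apply MeasureTheory.integral_congr_ae
    filter_upwards [hmem.coeFn_toLp] with x hx
    rw [hx]
  have hpars := tsum_sq_fourierCoeff f
  have hint : ∫ t, ‖f t‖^2 ∂(@AddCircle.haarAddCircle (2*π) _) = ∫ t, ‖G t‖^2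
      ∂(@AddCircle.haarAddCircle (2*π) _) := by
    apply MeasureTheory.integral_congr_ae
    filter_upwards [hmem.coeFn_toLp] with x hx
    rw [hx]
  have hsum : Summable (fun n : ℤ => ‖fourierCoeff (⇑f) n‖^2) := by
    have h1 := lp.memℓp (fourierBasis.repr f)
    rw [memℓp_gen_iff (by norm_num : (0:ℝ) < (2 : ENNReal).toReal)] at h1
    refine h1.congr fun n => ?_
    rw [fourierBasis_repr, show ((2:ENNReal).toReal) = ((2:ℕ):ℝ) by norm_num,
      Real.rpow_natCast]
  constructor
  · simpa only [hcoeff] using hsum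
  · have := hpars
    rw [hint, integral_sq_lift hm] at this
    simpa only [hcoeff] using this

lemma fourierCoeff_liftIoc_zero {y : ℝ → ℂ}
    (hmean : ∫ t in (0:ℝ)..(2*π), y t = 0) :
    fourierCoeff (AddCircle.liftIoc (2*π) 0 y) 0 = 0 := by
  rw [fourierCoeff_liftIoc_eq, fourierCoeffOn_eq_integral]
  simp only [neg_zero, fourier_zero, one_smul, zero_add, sub_zero]
  rw [hmean, smul_zero]

lemma coeff_deriv {y : ℝ → ℂ} (hy : Differentiable ℝ y) (hper : y (2*π) = y 0)
    (hd : IntervalIntegrable (deriv y) volume 0 (0+2*π)) {n : ℤ} (hn : n ≠ 0) :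
    ‖fourierCoeff (AddCircle.liftIoc (2*π) 0 y) n‖
      ≤ ‖fourierCoeff (AddCircle.liftIoc (2*π) 0 (deriv y)) n‖ := by
  have h2 := fourierCoeffOn_of_hasDerivAt (lt_add_of_pos_right 0 fact2pi.out) hn
      (f := y) (f' := deriv y) (fun x _ => (hy x).hasDerivAt) hd
  rw [fourierCoeff_liftIoc_eq, fourierCoeff_liftIoc_eq, h2]
  set D := fourierCoeffOn (lt_add_of_pos_right 0 fact2pi.out) (deriv y) n with hD
  simp only [zero_add, sub_zero] at *
  rw [hper, sub_self, mul_zero, zero_sub, norm_mul, norm_neg, norm_mul]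
  have hn1 : (1:ℝ) ≤ |(n:ℝ)| := by exact_mod_cast Int.one_le_abs hn
  have e1 : ‖(1:ℂ) / (-2 * (π:ℂ) * Complex.I * (n:ℂ))‖ = 1 / (2*π*|(n:ℝ)|) := by
    rw [norm_div, norm_one]
    simp [norm_mul, Complex.norm_real, abs_of_pos pi_pos]
  rw [e1]
  have e2 : ‖((2*π : ℝ) : ℂ) - ((0:ℝ) : ℂ)‖ = 2*π := by
    norm_num [pi_nonneg]
  rw [e2]
  have hπ : (0:ℝ) < π := pi_pos
  have h0 : 0 < |(n:ℝ)| := lt_of_lt_of_le one_pos hn1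
  have : 1 / (2*π*|(n:ℝ)|) * (2*π*‖D‖) = ‖D‖ / |(n:ℝ)| := by
    field_simp
  rw [this]
  exact div_le_self (norm_nonneg _) hn1

lemma wirtinger {y : ℝ → ℂ} (hy : Differentiable ℝ y) (hper : y (2*π) = y 0)
    (hmean : ∫ t in (0:ℝ)..(2*π), y t = 0)
    (hd2 : IntervalIntegrable (fun t => ‖deriv y t‖^2) volume 0 (2*π)) :
    ∫ t in (0:ℝ)..(2*π), ‖y t‖^2 ≤ ∫ t in (0:ℝ)..(2*π), ‖deriv y t‖^2 := by
  have hcont : Continuous y := hy.continuous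
  have hmy : Measurable y := hcont.measurable
  have hmd : Measurable (deriv y) := measurable_deriv y
  have hy2 : IntervalIntegrable (fun t => ‖y t‖^2) volume 0 (2*π) :=
    ((hcont.norm.pow 2).intervalIntegrable _ _)
  have hd1 : IntervalIntegrable (deriv y) volume 0 (2*π) := by
    have hb : IntervalIntegrable (fun t => 1 + ‖deriv y t‖^2) volume 0 (2*π) :=
      intervalIntegrable_const.add hd2
    refine hb.mono_fun' hmd.aestronglyMeasurable ?_
    filter_upwards with t
    have h0 : (0:ℝ) ≤ ‖deriv y t‖ := norm_nonneg _
    nlinarith [h0]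
  obtain ⟨hsy, hey⟩ := parseval_lift hmy hy2
  obtain ⟨hsd, hed⟩ := parseval_lift hmd hd2
  have hterm : ∀ n : ℤ, ‖fourierCoeff (AddCircle.liftIoc (2*π) 0 y) n‖^2
      ≤ ‖fourierCoeff (AddCircle.liftIoc (2*π) 0 (deriv y)) n‖^2 := by
    intro n
    rcases eq_or_ne n 0 with rfl | hn
    · rw [fourierCoeff_liftIoc_zero hmean]
      simpa using sq_nonneg ‖fourierCoeff (AddCircle.liftIoc (2*π) 0 (deriv y)) 0‖
    · exact pow_le_pow_left₀ (norm_nonneg _) (coeff_deriv hy hper (by rwa [zero_add]) hn) 2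
  have hle := Summable.tsum_le_tsum hterm hsy hsd
  rw [hey, hed] at hle
  have h2π : (0:ℝ) < 1/(2*π) := by positivity
  exact le_of_mul_le_mul_left hle h2π

lemma part1 (hβ : β ∈ Set.Ico (0 : ℝ) 1) (he : e ∈ Set.Ico (0 : ℝ) 1) :
    ∃ y : ℝ → ℂ, Differentiable ℝ y ∧ y (2 * π) = y 0 ∧
      ∀ c : ℂ, c ≠ 0 → Qform β e (fun t => c * y t) < 0 := by
  obtain ⟨he0, he1⟩ := he
  obtain ⟨hβ0, hβ1⟩ := hβ
  set u : ℝ → ℝ := fun t => 1 + e * Real.cos t with hu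
  have hupos : ∀ t, 0 < u t := by
    intro t
    have h1 : |e * Real.cos t| ≤ e := by
      rw [abs_mul, abs_of_nonneg he0]
      nlinarith [abs_cos_le_one t, abs_nonneg (Real.cos t)]
    have := abs_le.mp h1
    simp only [hu]
    linarith
  set y : ℝ → ℂ := fun t => ((u t : ℝ) : ℂ) with hy
  have hud : ∀ t, HasDerivAt u (e * -Real.sin t) t := by
    intro t
    simpa [hu] using ((Real.hasDerivAt_cos t).const_mul e).const_add 1
  have hyd : ∀ t, HasDerivAt y ((e * -Real.sin t : ℝ) : ℂ) t := fun t => (hud t).ofReal_comp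
  refine ⟨y, fun t => (hyd t).differentiableAt, by simp [hy, hu], ?_⟩
  intro c hc
  have hderiv : ∀ t, deriv (fun s => c * y s) t = c * ((e * -Real.sin t : ℝ) : ℂ) := by
    intro t
    rw [deriv_const_mul c (hyd t).differentiableAt, (hyd t).deriv]
  have key : Qform β e (fun t => c * y t)
      = ‖c‖^2 * ∫ t in (0:ℝ)..(2*π),
        ((e * Real.sin t)^2 + (β / u t - 1) * (u t)^2) := by
    rw [Qform, ← intervalIntegral.integral_const_mul]
    apply intervalIntegral.integral_congr
    intro t _
    simp only [hderiv]
    simp only [hderiv, hy, norm_mul, Complex.norm_real, Real.norm_eq_abs, mul_pow, sq_abs, hu]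
    ring
  have hval : (∫ t in (0:ℝ)..(2*π), ((e * Real.sin t)^2 + (β / u t - 1) * (u t)^2))
      = 2*π*(β-1) := by
    have hpt : EqOn (fun t => (e * Real.sin t)^2 + (β / u t - 1) * (u t)^2)
        (fun t => e^2 * Real.sin t^2 - e^2 * Real.cos t^2 + (β - 1) + (β*e - 2*e) * Real.cos t)
        (uIcc (0:ℝ) (2*π)) := by
      intro t _
      have h := (hupos t).ne'
      simp only [hu] at h ⊢
      field_simp
      ring
    rw [intervalIntegral.integral_congr hpt]
    have iA : IntervalIntegrable (fun t => e^2 * Real.sin t^2) volume 0 (2*π) :=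
      (by continuity : Continuous fun t => e^2 * Real.sin t^2).intervalIntegrable _ _
    have iB : IntervalIntegrable (fun t => e^2 * Real.cos t^2) volume 0 (2*π) :=
      (by continuity : Continuous fun t => e^2 * Real.cos t^2).intervalIntegrable _ _
    have iC : IntervalIntegrable (fun _ : ℝ => β - 1) volume 0 (2*π) :=
      intervalIntegrable_const
    have iD : IntervalIntegrable (fun t => (β*e - 2*e) * Real.cos t) volume 0 (2*π) :=
      (by continuity : Continuous fun t => (β*e - 2*e) * Real.cos t).intervalIntegrable _ _
    rw [intervalIntegral.integral_add ((iA.sub iB).add iC) iD,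
      intervalIntegral.integral_add (iA.sub iB) iC,
      intervalIntegral.integral_sub iA iB]
    have I1 : (∫ t in (0:ℝ)..(2*π), e^2 * Real.sin t^2) = e^2 * π := by
      rw [intervalIntegral.integral_const_mul, integral_sin_sq]
      simp [Real.sin_two_pi, Real.cos_two_pi]
    have I2 : (∫ t in (0:ℝ)..(2*π), e^2 * Real.cos t^2) = e^2 * π := by
      rw [intervalIntegral.integral_const_mul, integral_cos_sq]
      simp [Real.sin_two_pi, Real.cos_two_pi]
    have I3 : (∫ _ in (0:ℝ)..(2*π), (β - 1)) = 2*π*(β-1) := by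
      rw [intervalIntegral.integral_const]
      simp [smul_eq_mul]
    have I4 : (∫ t in (0:ℝ)..(2*π), (β*e - 2*e) * Real.cos t) = 0 := by
      rw [intervalIntegral.integral_const_mul, integral_cos]
      simp [Real.sin_two_pi]
    rw [I1, I2, I3, I4]
    ring
  rw [key, hval]
  have hc2 : (0:ℝ) < ‖c‖^2 := pow_pos (norm_pos_iff.mpr hc) 2
  have : 2*π*(β-1) < 0 := by nlinarith [pi_pos]
  exact mul_neg_of_pos_of_neg hc2 this


lemma part2 {β e : ℝ} (hβ0 : 0 ≤ β) (he0 : 0 ≤ e) (he1 : e < 1)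
    (y₁ y₂ : ℝ → ℂ) (h1 : Differentiable ℝ y₁) (h2 : Differentiable ℝ y₂)
    (hp1 : y₁ (2*π) = y₁ 0) (hp2 : y₂ (2*π) = y₂ 0) :
    ∃ c₁ c₂ : ℂ, ¬(c₁ = 0 ∧ c₂ = 0) ∧ 0 ≤ Qform β e (fun t => c₁ * y₁ t + c₂ * y₂ t) := by
  set a := ∫ t in (0:ℝ)..(2*π), y₁ t with ha
  set b := ∫ t in (0:ℝ)..(2*π), y₂ t with hb'
  obtain ⟨c₁, c₂, hne, hmean0⟩ : ∃ c₁ c₂ : ℂ, ¬(c₁ = 0 ∧ c₂ = 0) ∧ c₁ * a + c₂ * b = 0 := by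
    by_cases hb : b = 0
    · exact ⟨0, 1, by simp, by simp [hb]⟩
    · exact ⟨b, -a, fun h => hb h.1, by ring⟩
  refine ⟨c₁, c₂, hne, ?_⟩
  set y : ℝ → ℂ := fun t => c₁ * y₁ t + c₂ * y₂ t with hy
  have hyd : Differentiable ℝ y := (h1.const_mul c₁).add (h2.const_mul c₂)
  have hyper : y (2*π) = y 0 := by simp only [hy, hp1, hp2]
  have hymean : ∫ t in (0:ℝ)..(2*π), y t = 0 := by
    simp only [hy]
    rw [intervalIntegral.integral_add (f := fun t => c₁ * y₁ t) (g := fun t => c₂ * y₂ t)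
        ((continuous_const.mul h1.continuous : Continuous fun t => c₁ * y₁ t).intervalIntegrable _ _)
        ((continuous_const.mul h2.continuous : Continuous fun t => c₂ * y₂ t).intervalIntegrable _ _),
      intervalIntegral.integral_const_mul, intervalIntegral.integral_const_mul, ← ha, ← hb']
    exact hmean0
  have hden : ∀ t : ℝ, 0 < 1 + e * Real.cos t := by
    intro t
    have h1 : |e * Real.cos t| ≤ e := by
      rw [abs_mul, abs_of_nonneg he0]
      nlinarith [abs_cos_le_one t, abs_nonneg (Real.cos t)]
    have := abs_le.mp h1
    linarith
  have hVcont : Continuous (fun t => β / (1 + e * Real.cos t) - 1) :=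
    (continuous_const.div (by continuity) (fun t => (hden t).ne')).sub continuous_const
  have hVge : ∀ t : ℝ, -1 ≤ β / (1 + e * Real.cos t) - 1 := by
    intro t
    have := div_nonneg hβ0 (hden t).le
    linarith
  have hI2 : IntervalIntegrable
      (fun t => (β / (1 + e * Real.cos t) - 1) * ‖y t‖^2) volume 0 (2*π) :=
    (hVcont.mul ((hyd.continuous.norm).pow 2)).intervalIntegrable _ _
  by_cases hint : IntervalIntegrable (fun t => ‖deriv y t‖^2) volume 0 (2*π)
  · -- integrable case
    rw [Qform, intervalIntegral.integral_add hint hI2]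
    have hw := wirtinger hyd hyper hymean hint
    have hy2 : IntervalIntegrable (fun t => ‖y t‖^2) volume 0 (2*π) :=
      ((hyd.continuous.norm).pow 2).intervalIntegrable _ _
    have hmono : ∫ t in (0:ℝ)..(2*π), (-(‖y t‖^2))
        ≤ ∫ t in (0:ℝ)..(2*π), (β / (1 + e * Real.cos t) - 1) * ‖y t‖^2 := by
      apply intervalIntegral.integral_mono_on (by positivity) hy2.neg hI2
      intro t _
      simp only [Pi.neg_apply]
      have := mul_le_mul_of_nonneg_right (hVge t) (sq_nonneg ‖y t‖)
      linarith
    rw [intervalIntegral.integral_neg] at hmono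
    linarith
  · -- non-integrable: the full integrand is not integrable, integral is 0
    have hnot : ¬ IntervalIntegrable
        (fun t => ‖deriv y t‖^2 + (β / (1 + e * Real.cos t) - 1) * ‖y t‖^2) volume 0 (2*π) := by
      intro h
      have h3 := h.sub hI2
      have heq : (fun t => (‖deriv y t‖^2 + (β / (1 + e * Real.cos t) - 1) * ‖y t‖^2)
          - (β / (1 + e * Real.cos t) - 1) * ‖y t‖^2) = fun t => ‖deriv y t‖^2 := by
        funext t
        ring
      rw [heq] at h3
      exact hint h3
    rw [Qform, intervalIntegral.integral_undef hnot]


end WirtingerAux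

/-- on the periodic domain `D(1,2π)`, the Morse index of `Q_{β,e}` equals 1:
there is a one-dimensional negative-definite subspace (the span of some `y`), and no
two-dimensional negative-definite subspace. -/


theorem stmt_4 (β e : ℝ) (hβ : β ∈ Set.Ico (0 : ℝ) 1) (he : e ∈ Set.Ico (0 : ℝ) 1) :
    (∃ y : ℝ → ℂ, Differentiable ℝ y ∧ y (2 * π) = y 0 ∧
      ∀ c : ℂ, c ≠ 0 → Qform β e (fun t => c * y t) < 0) ∧
    (∀ y₁ y₂ : ℝ → ℂ, Differentiable ℝ y₁ → Differentiable ℝ y₂ →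
      y₁ (2 * π) = y₁ 0 → y₂ (2 * π) = y₂ 0 →
      LinearIndependent ℂ ![y₁, y₂] →
      ∃ c₁ c₂ : ℂ, ¬(c₁ = 0 ∧ c₂ = 0) ∧
        0 ≤ Qform β e (fun t => c₁ * y₁ t + c₂ * y₂ t)) := by
  constructor
  · exact part1 hβ he
  · intro y₁ y₂ hd₁ hd₂ hpp₁ hpp₂ _
    exact part2 hβ.1 he.1 he.2 y₁ y₂ hd₁ hd₂ hpp₁ hpp₂
end
end

section
/- For every β ∈ (0,1) and e ∈ [0,1), the monodromy matrix is 1-nondegenerate: det(γ_{β,e}(2π) − I₂) ≠ 0. Equivalently, the only 2π-periodic solution of x''(t) = −x(t) + β x(t)/(1 + e cos t) (i.e., a solution with x(2π) = x(0) and x'(2π) = x'(0)) is x ≡ 0. -/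
open Real Matrix

attribute [local instance] Matrix.normedAddCommGroup

noncomputable section

section Helpers
open Set
variable {β e : ℝ}

private lemma rpos (he0 : 0 ≤ e) (he1 : e < 1) (t : ℝ) : 0 < 1 + e * Real.cos t := by
  nlinarith [Real.neg_one_le_cos t, Real.cos_le_one t]

/-- Uniqueness for the scalar second-order ODE, phrased for pairs. -/
private lemma uniq (hβ0 : 0 < β) (hβ1 : β < 1) (he0 : 0 ≤ e) (he1 : e < 1)
    {x x' y y' : ℝ → ℝ}
    (hx : ∀ t, HasDerivAt x (x' t) t)
    (hx' : ∀ t, HasDerivAt x' (-(x t) + β * x t / (1 + e * Real.cos t)) t)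
    (hy : ∀ t, HasDerivAt y (y' t) t)
    (hy' : ∀ t, HasDerivAt y' (-(y t) + β * y t / (1 + e * Real.cos t)) t)
    {t₀ : ℝ} (h1 : x t₀ = y t₀) (h2 : x' t₀ = y' t₀) :
    ∀ t, x t = y t ∧ x' t = y' t := by
  intro t
  set v : ℝ → ℝ × ℝ → ℝ × ℝ := fun s p => (p.2, -p.1 + β * p.1 / (1 + e * Real.cos s)) with hv
  have hK : ∃ K : NNReal, ∀ s, LipschitzWith K (v s) := by
    have h1e : (0:ℝ) < 1 - e := by linarith
    have hKnn : (0:ℝ) ≤ 1 + 1/(1-e) := by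
      have := one_div_pos.mpr h1e; linarith
    refine ⟨⟨1 + 1/(1-e), hKnn⟩, fun s => LipschitzWith.of_dist_le_mul fun p q => ?_⟩
    have hr := rpos he0 he1 s
    set r := 1 + e * Real.cos s with hrdef
    have hre : 1 - e ≤ r := by
      have := mul_le_mul_of_nonneg_left (Real.neg_one_le_cos s) he0
      simp only [hrdef]; nlinarith
    have hco : |(-1 + β / r)| ≤ 1 + 1/(1-e) := by
      rw [abs_le]
      constructor
      · have h2 : 0 ≤ β / r := by positivity
        have h3 : 0 < 1/(1-e) := one_div_pos.mpr h1e
        linarith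
      · have : β / r ≤ 1 / (1 - e) :=
          div_le_div₀ (by linarith) (le_of_lt hβ1) h1e hre
        linarith
    rw [Prod.dist_eq, Prod.dist_eq]
    simp only [v, Real.dist_eq]
    rw [max_le_iff]
    constructor
    · calc |p.2 - q.2| ≤ max |p.1 - q.1| |p.2 - q.2| := le_max_right _ _
        _ ≤ (1 + 1/(1-e)) * max |p.1 - q.1| |p.2 - q.2| := by
            nlinarith [le_max_left |p.1 - q.1| |p.2 - q.2|, abs_nonneg (p.1 - q.1),
              abs_nonneg (p.2 - q.2), one_div_pos.mpr h1e]
    · have : (-p.1 + β * p.1 / r) - (-q.1 + β * q.1 / r) = (-1 + β / r) * (p.1 - q.1) := by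
        field_simp
      rw [this, abs_mul]
      calc |(-1 + β / r)| * |p.1 - q.1| ≤ (1 + 1/(1-e)) * |p.1 - q.1| := by
            apply mul_le_mul_of_nonneg_right hco (abs_nonneg _)
        _ ≤ (1 + 1/(1-e)) * max |p.1 - q.1| |p.2 - q.2| := by
            apply mul_le_mul_of_nonneg_left (le_max_left _ _) hKnn
  obtain ⟨K, hK⟩ := hK
  have hf : ∀ s, HasDerivAt (fun u => (x u, x' u)) (v s (x s, x' s)) s := by
    intro s; exact (hx s).prodMk (hx' s)
  have hg : ∀ s, HasDerivAt (fun u => (y u, y' u)) (v s (y s, y' s)) s := by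
    intro s; exact (hy s).prodMk (hy' s)
  have key : EqOn (fun u => (x u, x' u)) (fun u => (y u, y' u))
      (Ioo (min t t₀ - 1) (max t t₀ + 1)) := by
    apply ODE_solution_unique_of_mem_Ioo (s := fun _ => (univ : Set (ℝ × ℝ)))
      (fun s _ => (hK s).lipschitzOnWith)
      (t₀ := t₀)
      (⟨by have := min_le_right t t₀; linarith, by have := le_max_right t t₀; linarith⟩)
      (fun s _ => ⟨hf s, trivial⟩) (fun s _ => ⟨hg s, trivial⟩)
      (by simp [h1, h2])
  have ht : t ∈ Ioo (min t t₀ - 1) (max t t₀ + 1) :=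
    ⟨by have := min_le_left t t₀; linarith, by have := le_max_left t t₀; linarith⟩
  have := key ht
  exact ⟨congrArg Prod.fst this, congrArg Prod.snd this⟩

/-- Solutions with periodic boundary data are `2π`-periodic. -/
private lemma periodic (hβ0 : 0 < β) (hβ1 : β < 1) (he0 : 0 ≤ e) (he1 : e < 1)
    {x x' : ℝ → ℝ}
    (hx : ∀ t, HasDerivAt x (x' t) t)
    (hx' : ∀ t, HasDerivAt x' (-(x t) + β * x t / (1 + e * Real.cos t)) t)
    (hper : x (2*π) = x 0) (hper' : x' (2*π) = x' 0) :
    ∀ t, x (t + 2*π) = x t ∧ x' (t + 2*π) = x' t := by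
  have hy : ∀ t, HasDerivAt (fun s => x (s + 2*π)) (x' (t + 2*π)) t := by
    intro t
    have := (hx (t + 2*π)).comp t ((hasDerivAt_id t).add_const (2*π))
    simpa [Function.comp_def] using this
  have hy' : ∀ t, HasDerivAt (fun s => x' (s + 2*π))
      (-(x (t + 2*π)) + β * x (t + 2*π) / (1 + e * Real.cos t)) t := by
    intro t
    have := (hx' (t + 2*π)).comp t ((hasDerivAt_id t).add_const (2*π))
    simpa [Function.comp_def, Real.cos_add_two_pi] using this
  have := uniq hβ0 hβ1 he0 he1 hx hx' hy hy' (t₀ := 0)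
    (by simpa using hper.symm) (by simpa using hper'.symm)
  intro t
  exact ⟨(this t).1.symm, (this t).2.symm⟩

/-- Integer-shift periodicity. -/
private lemma periodicZ {x : ℝ → ℝ} (h : ∀ t, x (t + 2*π) = x t) :
    ∀ (k : ℤ) (t : ℝ), x (t + 2*π*k) = x t := by
  intro k
  induction k using Int.induction_on with
  | zero => simp
  | succ n ih =>
      intro t
      have : t + 2*π*((n:ℤ)+1:ℤ) = (t + 2*π*(n:ℤ)) + 2*π := by push_cast; ring
      rw [this, h, ih]
  | pred n ih =>
      intro t
      have : t + 2*π*(-(n:ℤ)-1:ℤ) + 2*π = t + 2*π*(-(n:ℤ):ℤ) := by push_cast; ring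
      have h2 := h (t + 2*π*(-(n:ℤ)-1:ℤ))
      rw [this] at h2
      rw [show ((-(n:ℤ)-1:ℤ):ℝ) = ((-(n:ℤ)-1:ℤ):ℝ) from rfl] at *
      calc x (t + 2*π*((-(n:ℤ)-1:ℤ):ℝ)) = x (t + 2*π*((-(n:ℤ):ℤ):ℝ)) := h2.symm
        _ = x t := ih t

/-- The mean of a periodic solution vanishes. -/
private lemma integral_zero (hβ0 : 0 < β) (hβ1 : β < 1) (he0 : 0 ≤ e) (he1 : e < 1)
    {x x' : ℝ → ℝ}
    (hx : ∀ t, HasDerivAt x (x' t) t)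
    (hx' : ∀ t, HasDerivAt x' (-(x t) + β * x t / (1 + e * Real.cos t)) t)
    (hper : x (2*π) = x 0) (hper' : x' (2*π) = x' 0) :
    ∫ t in (0:ℝ)..(2*π), x t = 0 := by
  have hxc : Continuous x := by
    rw [continuous_iff_continuousAt]; exact fun t => (hx t).continuousAt
  set W : ℝ → ℝ := fun t => x t * (-e * Real.sin t) - x' t * (1 + e * Real.cos t) with hWdef
  have hW : ∀ t, HasDerivAt W ((1-β) * x t) t := by
    intro t
    have hr := rpos he0 he1 t
    have d1 : HasDerivAt (fun s => -e * Real.sin s) (-e * Real.cos t) t :=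
      (Real.hasDerivAt_sin t).const_mul (-e)
    have d2 : HasDerivAt (fun s => 1 + e * Real.cos s) (e * -Real.sin t) t :=
      ((Real.hasDerivAt_cos t).const_mul e).const_add 1
    have := ((hx t).mul d1).sub ((hx' t).mul d2)
    refine this.congr_deriv ?_
    field_simp [hr.ne']
    ring
  have hFTC := intervalIntegral.integral_eq_sub_of_hasDerivAt
    (f := W) (f' := fun t => (1-β) * x t) (a := 0) (b := 2*π)
    (fun t _ => hW t) ((continuous_const.mul hxc).intervalIntegrable 0 (2*π))
  have hWp : W (2*π) = W 0 := by
    simp only [hWdef, Real.sin_two_pi, Real.cos_two_pi, Real.sin_zero, Real.cos_zero, hper, hper']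
  rw [hWp, sub_self] at hFTC
  have : (1-β) * ∫ t in (0:ℝ)..(2*π), x t = 0 := by
    rw [← intervalIntegral.integral_const_mul]; exact hFTC
  have h1β : (1:ℝ) - β ≠ 0 := by linarith
  exact (mul_eq_zero.mp this).resolve_left h1β

private lemma exists_shift (L c q : ℝ) (hL : 0 < L) : ∃ k : ℤ, q + L*k ∈ Ico c (c + L) := by
  refine ⟨⌈(c - q)/L⌉, ?_, ?_⟩
  · have h1 : (c-q)/L ≤ ((⌈(c-q)/L⌉ : ℤ) : ℝ) := Int.le_ceil _
    have h2 := mul_le_mul_of_nonneg_left h1 hL.le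
    rw [mul_div_cancel₀ _ hL.ne'] at h2
    linarith
  · have h1 : ((⌈(c-q)/L⌉ : ℤ) : ℝ) < (c-q)/L + 1 := Int.ceil_lt_add_one _
    have h2 := mul_lt_mul_of_pos_left h1 hL
    rw [mul_add, mul_one, mul_div_cancel₀ _ hL.ne'] at h2
    linarith

/-- A continuous periodic nonnegative function with zero mean is zero. -/
private lemma nonneg_zero {x : ℝ → ℝ} (hxc : Continuous x)
    (hp : ∀ (k : ℤ) (t : ℝ), x (t + 2*π*k) = x t)
    (hint : ∫ t in (0:ℝ)..(2*π), x t = 0)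
    (hnn : ∀ t, 0 ≤ x t) : ∀ t, x t = 0 := by
  by_contra h
  push_neg at h
  obtain ⟨t₀, ht₀⟩ := h
  have ht₀' : 0 < x t₀ := (hnn t₀).lt_of_ne (Ne.symm ht₀)
  obtain ⟨k, hk⟩ := exists_shift (2*π) 0 t₀ (by positivity)
  set s := t₀ + 2*π*k with hs
  have hxs : 0 < x s := by rw [hs, hp]; exact ht₀'
  rw [zero_add] at hk
  have hU : IsOpen (x ⁻¹' Ioi (x s / 2)) := isOpen_Ioi.preimage hxc
  have hsU : s ∈ x ⁻¹' Ioi (x s / 2) := by simp; linarith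
  obtain ⟨δ, hδ, hball⟩ := Metric.isOpen_iff.mp hU s hsU
  set v := min (s + δ/2) (2*π) with hv
  have hsv : s < v := lt_min (by linarith) hk.2
  have hv2π : v ≤ 2*π := min_le_right _ _
  have hmem : ∀ t ∈ Icc s v, x s / 2 ≤ x t := by
    intro t ht
    have : t ∈ Metric.ball s δ := by
      rw [Metric.mem_ball, Real.dist_eq, abs_sub_lt_iff]
      constructor
      · have : t ≤ s + δ/2 := ht.2.trans (min_le_left _ _)
        linarith
      · linarith [ht.1]
    exact le_of_lt (hball this)
  have hii : ∀ a b : ℝ, IntervalIntegrable x MeasureTheory.volume a b :=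
    fun a b => hxc.intervalIntegrable a b
  have hsplit : (∫ t in (0:ℝ)..s, x t) + ((∫ t in s..v, x t) + (∫ t in v..(2*π), x t))
      = ∫ t in (0:ℝ)..(2*π), x t := by
    rw [intervalIntegral.integral_add_adjacent_intervals (hii s v) (hii v (2*π)),
      intervalIntegral.integral_add_adjacent_intervals (hii 0 s) (hii s (2*π))]
  have h1 : 0 ≤ ∫ t in (0:ℝ)..s, x t :=
    intervalIntegral.integral_nonneg hk.1 (fun u _ => hnn u)
  have h3 : 0 ≤ ∫ t in v..(2*π), x t :=
    intervalIntegral.integral_nonneg hv2π (fun u _ => hnn u)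
  have h2 : (v - s) * (x s / 2) ≤ ∫ t in s..v, x t := by
    have := intervalIntegral.integral_mono_on hsv.le
      (intervalIntegrable_const (c := x s / 2)) (hii s v) hmem
    rwa [intervalIntegral.integral_const, smul_eq_mul] at this
  have hpos : 0 < (v - s) * (x s / 2) := by
    apply mul_pos (by linarith) (by linarith)
  rw [hint] at hsplit
  linarith

/-- At a zero approached from a positivity interval, the derivative is nonpositive. -/
private lemma deriv_nonpos {x : ℝ → ℝ} {x' : ℝ → ℝ} (hx : ∀ t, HasDerivAt x (x' t) t)
    {a b : ℝ} (hab : a < b) (hxb : x b = 0) (hpos : ∀ t ∈ Ioo a b, 0 < x t) :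
    x' b ≤ 0 := by
  have hslope : Filter.Tendsto (slope x b) (nhdsWithin b (Iio b)) (nhds (x' b)) :=
    (hasDerivAt_iff_tendsto_slope.mp (hx b)).mono_left
      (nhdsWithin_mono _ (fun t ht => ht.ne))
  refine le_of_tendsto hslope ?_
  have hIoi : Ioi a ∈ nhdsWithin b (Iio b) :=
    mem_nhdsWithin_of_mem_nhds (isOpen_Ioi.mem_nhds hab)
  filter_upwards [hIoi, self_mem_nhdsWithin] with t ht1 ht2
  have hxt : 0 < x t := hpos t ⟨ht1, ht2⟩
  have htb : t < b := ht2
  rw [slope_def_field]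
  apply div_nonpos_of_nonneg_of_nonpos
  · rw [hxb]; linarith
  · linarith

/-- Sturm comparison: a positivity interval between zeros has length `> π`. -/
private lemma sturm (hβ0 : 0 < β) (hβ1 : β < 1) (he0 : 0 ≤ e) (he1 : e < 1)
    {x x' : ℝ → ℝ}
    (hx : ∀ t, HasDerivAt x (x' t) t)
    (hx' : ∀ t, HasDerivAt x' (-(x t) + β * x t / (1 + e * Real.cos t)) t)
    {a b : ℝ} (hab : a < b) (hxa : x a = 0) (hxb : x b = 0)
    (hpos : ∀ t ∈ Ioo a b, 0 < x t) : π < b - a := by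
  by_contra hcon
  push_neg at hcon
  set W : ℝ → ℝ := fun t => x t * Real.cos (t - a) - x' t * Real.sin (t - a) with hWdef
  have hW : ∀ t, HasDerivAt W (-(β / (1 + e * Real.cos t)) * (x t * Real.sin (t - a))) t := by
    intro t
    have hr := rpos he0 he1 t
    have did : HasDerivAt (fun s : ℝ => s - a) 1 t := (hasDerivAt_id t).sub_const a
    have dcos : HasDerivAt (fun s : ℝ => Real.cos (s - a)) (-Real.sin (t - a)) t := by
      have := (Real.hasDerivAt_cos (t - a)).comp t did
      simpa [Function.comp_def] using this
    have dsin : HasDerivAt (fun s : ℝ => Real.sin (s - a)) (Real.cos (t - a)) t := by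
      have := (Real.hasDerivAt_sin (t - a)).comp t did
      simpa [Function.comp_def] using this
    have := ((hx t).mul dcos).sub ((hx' t).mul dsin)
    refine this.congr_deriv ?_
    field_simp [hr.ne']
    ring
  have hanti : StrictAntiOn W (Icc a b) := by
    apply strictAntiOn_of_deriv_neg (convex_Icc a b)
    · exact fun t _ => (hW t).continuousAt.continuousWithinAt
    · intro t ht
      rw [interior_Icc] at ht
      rw [(hW t).deriv]
      have hr := rpos he0 he1 t
      have hxt := hpos t ht
      have hsin : 0 < Real.sin (t - a) := by
        apply Real.sin_pos_of_pos_of_lt_pi (by linarith [ht.1])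
        linarith [ht.2]
      have hq : 0 < β / (1 + e * Real.cos t) := by positivity
      nlinarith [mul_pos hxt hsin, mul_pos hq (mul_pos hxt hsin)]
  have hWa : W a = 0 := by simp [hWdef, hxa]
  have hWb : W b = -(x' b) * Real.sin (b - a) := by simp [hWdef, hxb]
  have hWba : W b < W a := hanti (left_mem_Icc.mpr hab.le) (right_mem_Icc.mpr hab.le) hab
  have hsin_nn : 0 ≤ Real.sin (b - a) :=
    Real.sin_nonneg_of_nonneg_of_le_pi (by linarith) hcon
  have hxd : x' b ≤ 0 := deriv_nonpos hx hab hxb hpos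
  nlinarith [hWba, hWa, hWb]

private lemma last_zero {x : ℝ → ℝ} (hxc : Continuous x) {l p : ℝ} (hlp : l ≤ p)
    (hz : ∃ z ∈ Icc l p, x z = 0) (hp : 0 < x p) :
    ∃ a ∈ Ico l p, x a = 0 ∧ ∀ t ∈ Ioc a p, 0 < x t := by
  set S := Icc l p ∩ x ⁻¹' {0} with hS
  have hSc : IsClosed S := isClosed_Icc.inter (isClosed_singleton.preimage hxc)
  have hSne : S.Nonempty := by
    obtain ⟨z, hz1, hz2⟩ := hz; exact ⟨z, hz1, hz2⟩
  have hSbdd : BddAbove S := ⟨p, fun t ht => ht.1.2⟩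
  set a := sSup S with ha
  have haS : a ∈ S := hSc.csSup_mem hSne hSbdd
  have hxa : x a = 0 := haS.2
  have hap : a < p := lt_of_le_of_ne haS.1.2 (fun h => by rw [h] at hxa; linarith)
  have hnoz : ∀ t ∈ Ioc a p, x t ≠ 0 := by
    intro t ht hc
    have : t ∈ S := ⟨⟨le_trans haS.1.1 ht.1.le, ht.2⟩, hc⟩
    exact absurd (le_csSup hSbdd this) (not_le.mpr ht.1)
  refine ⟨a, ⟨haS.1.1, hap⟩, hxa, ?_⟩
  intro t ht
  rcases lt_trichotomy (x t) 0 with hlt | heq | hgt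
  · exfalso
    have hcont : ContinuousOn x (Icc t p) := hxc.continuousOn
    have := intermediate_value_Ioo ht.2 hcont
    have h0 : (0:ℝ) ∈ Ioo (x t) (x p) := ⟨hlt, hp⟩
    obtain ⟨z, hz1, hz2⟩ := this h0
    exact hnoz z ⟨ht.1.trans hz1.1, hz1.2.le⟩ hz2
  · exact absurd heq (hnoz t ht)
  · exact hgt

private lemma first_zero {x : ℝ → ℝ} (hxc : Continuous x) {p u : ℝ} (hpu : p ≤ u)
    (hz : ∃ z ∈ Icc p u, x z = 0) (hp : 0 < x p) :
    ∃ b ∈ Ioc p u, x b = 0 ∧ ∀ t ∈ Ico p b, 0 < x t := by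
  set S := Icc p u ∩ x ⁻¹' {0} with hS
  have hSc : IsClosed S := isClosed_Icc.inter (isClosed_singleton.preimage hxc)
  have hSne : S.Nonempty := by
    obtain ⟨z, hz1, hz2⟩ := hz; exact ⟨z, hz1, hz2⟩
  have hSbdd : BddBelow S := ⟨p, fun t ht => ht.1.1⟩
  set b := sInf S with hb
  have hbS : b ∈ S := hSc.csInf_mem hSne hSbdd
  have hxb : x b = 0 := hbS.2
  have hpb : p < b := lt_of_le_of_ne hbS.1.1 (fun h => by rw [← h] at hxb; linarith)
  have hnoz : ∀ t ∈ Ico p b, x t ≠ 0 := by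
    intro t ht hc
    have : t ∈ S := ⟨⟨ht.1, le_trans ht.2.le hbS.1.2⟩, hc⟩
    exact absurd (csInf_le hSbdd this) (not_le.mpr ht.2)
  refine ⟨b, ⟨hpb, hbS.1.2⟩, hxb, ?_⟩
  intro t ht
  rcases lt_trichotomy (x t) 0 with hlt | heq | hgt
  · exfalso
    have hcont : ContinuousOn x (Icc p t) := hxc.continuousOn
    have := intermediate_value_Ioo' ht.1 hcont
    have h0 : (0:ℝ) ∈ Ioo (x t) (x p) := ⟨hlt, hp⟩
    obtain ⟨z, hz1, hz2⟩ := this h0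
    exact hnoz z ⟨hz1.1.le, hz1.2.trans ht.2⟩ hz2
  · exact absurd heq (hnoz t ht)
  · exact hgt

/-- Core lemma: the only periodic solution is zero. -/
private lemma core (hβ0 : 0 < β) (hβ1 : β < 1) (he0 : 0 ≤ e) (he1 : e < 1)
    {x x' : ℝ → ℝ}
    (hx : ∀ t, HasDerivAt x (x' t) t)
    (hx' : ∀ t, HasDerivAt x' (-(x t) + β * x t / (1 + e * Real.cos t)) t)
    (hper : x (2*π) = x 0) (hper' : x' (2*π) = x' 0) :
    ∀ t, x t = 0 := by
  by_contra h
  push_neg at h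
  obtain ⟨t₀, ht₀⟩ := h
  have h2π : (0:ℝ) < 2*π := by positivity
  have hxc : Continuous x := by
    rw [continuous_iff_continuousAt]; exact fun t => (hx t).continuousAt
  have hpx : ∀ t, x (t + 2*π) = x t :=
    fun t => (periodic hβ0 hβ1 he0 he1 hx hx' hper hper' t).1
  have hpZ := periodicZ hpx
  have hint := integral_zero hβ0 hβ1 he0 he1 hx hx' hper hper'
  set y : ℝ → ℝ := fun s => -x s with hy0
  have hyc : Continuous y := hxc.neg
  have hy : ∀ t, HasDerivAt y (-x' t) t := fun t => (hx t).neg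
  have hy' : ∀ t, HasDerivAt (fun s => -x' s) (-(y t) + β * y t / (1 + e * Real.cos t)) t := by
    intro t
    have := (hx' t).neg
    refine this.congr_deriv ?_
    have hr := (rpos he0 he1 t).ne'
    field_simp
    ring
  have hpos_ex : ∃ p, 0 < x p := by
    by_contra hno
    push_neg at hno
    have := nonneg_zero hyc (fun k t => by simp only [hy0]; rw [hpZ k t])
      (by rw [hy0]; rw [intervalIntegral.integral_neg, hint, neg_zero])
      (fun t => by simp only [hy0]; linarith [hno t])
    have := this t₀
    simp only [hy0, neg_eq_zero] at this
    exact ht₀ this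
  have hneg_ex : ∃ q, x q < 0 := by
    by_contra hno
    push_neg at hno
    exact ht₀ (nonneg_zero hxc hpZ hint hno t₀)
  obtain ⟨p, hp⟩ := hpos_ex
  obtain ⟨q₀, hq₀⟩ := hneg_ex
  -- a zero to the left of p and the positivity interval around p
  obtain ⟨k1, hk1⟩ := exists_shift (2*π) (p - 2*π) q₀ h2π
  rw [show p - 2*π + 2*π = p by ring] at hk1
  have hq₁ : x (q₀ + 2*π*k1) < 0 := by rw [hpZ]; exact hq₀
  have hzl : ∃ z ∈ Icc (p - 2*π) p, x z = 0 := by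
    obtain ⟨z, hz1, hz2⟩ := intermediate_value_Ioo hk1.2.le (hxc.continuousOn
      (s := Icc (q₀ + 2*π*k1) p)) (show (0:ℝ) ∈ Ioo (x (q₀ + 2*π*k1)) (x p) from ⟨hq₁, hp⟩)
    exact ⟨z, ⟨le_trans hk1.1 hz1.1.le, hz1.2.le⟩, hz2⟩
  obtain ⟨a, ha, hxa, hposl⟩ := last_zero hxc (by linarith [hk1.2]) hzl hp
  -- a zero to the right of p
  obtain ⟨k2, hk2⟩ := exists_shift (2*π) p q₀ h2π
  have hq₂ : x (q₀ + 2*π*k2) < 0 := by rw [hpZ]; exact hq₀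
  have hq₂p : p < q₀ + 2*π*k2 :=
    lt_of_le_of_ne hk2.1 (fun h => by rw [h] at hp; linarith)
  have hzr : ∃ z ∈ Icc p (p + 2*π), x z = 0 := by
    obtain ⟨z, hz1, hz2⟩ := intermediate_value_Ioo' hq₂p.le (hxc.continuousOn
      (s := Icc p (q₀ + 2*π*k2))) (show (0:ℝ) ∈ Ioo (x (q₀ + 2*π*k2)) (x p) from ⟨hq₂, hp⟩)
    exact ⟨z, ⟨hz1.1.le, le_trans hz1.2.le hk2.2.le⟩, hz2⟩
  obtain ⟨b, hbm, hxb, hposr⟩ := first_zero hxc (by linarith [hk2.2]) hzr hp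
  have hab : a < b := ha.2.trans hbm.1
  have hposab : ∀ t ∈ Ioo a b, 0 < x t := by
    intro t ht
    rcases le_or_gt t p with h | h
    · rcases eq_or_lt_of_le h with rfl | h'
      · exact hp
      · exact hposl t ⟨ht.1, h⟩
    · exact hposr t ⟨h.le, ht.2⟩
  have hπab : π < b - a := sturm hβ0 hβ1 he0 he1 hx hx' hab hxa hxb hposab
  -- a negative point q in (b, b + 2π)
  obtain ⟨k3, hk3⟩ := exists_shift (2*π) b q₀ h2π
  set q := q₀ + 2*π*k3 with hqdef
  have hq : x q < 0 := by rw [hqdef, hpZ]; exact hq₀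
  have hbq : b < q := lt_of_le_of_ne hk3.1 (fun h => by rw [← h, hxb] at hq; linarith)
  -- the negativity interval (c, d) around q
  have hyq : 0 < y q := by simp only [hy0]; linarith
  have hzc : ∃ z ∈ Icc b q, y z = 0 := ⟨b, ⟨le_refl b, hbq.le⟩, by simp [hy0, hxb]⟩
  obtain ⟨c, hcm, hyc0, hnegl⟩ := last_zero hyc hbq.le hzc hyq
  have hxb2 : x (b + 2*π) = 0 := by rw [hpx]; exact hxb
  have hzd : ∃ z ∈ Icc q (b + 2*π), y z = 0 :=
    ⟨b + 2*π, ⟨hk3.2.le, le_refl _⟩, by simp [hy0, hxb2]⟩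
  obtain ⟨d, hdm, hyd0, hnegr⟩ := first_zero hyc hk3.2.le hzd hyq
  have hcd : c < d := hcm.2.trans hdm.1
  have hposcd : ∀ t ∈ Ioo c d, 0 < y t := by
    intro t ht
    rcases le_or_gt t q with h | h
    · rcases eq_or_lt_of_le h with rfl | h'
      · exact hyq
      · exact hnegl t ⟨ht.1, h⟩
    · exact hnegr t ⟨h.le, ht.2⟩
  have hπcd : π < d - c := sturm hβ0 hβ1 he0 he1 hy hy' hcd hyc0 hyd0 hposcd
  -- combine
  rcases le_or_gt d (a + 2*π) with hcase | hcase
  · -- total length too large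
    have hbc : b ≤ c := hcm.1
    linarith
  · rcases lt_or_ge c (a + 2*π) with hc2 | hc2
    · -- x (a + 2π) = 0 inside the negativity interval
      have := hposcd (a + 2*π) ⟨hc2, hcase⟩
      have hz : x (a + 2*π) = 0 := by rw [hpx]; exact hxa
      simp only [hy0, hz] at this
      linarith
    · -- overlap of positivity and negativity intervals
      set t := (c + d) / 2 with ht
      have htm : t ∈ Ioo c d := ⟨by simp only [ht]; linarith, by simp only [ht]; linarith⟩
      have h1 := hposcd t htm
      have h2 := hposab (t - 2*π) ⟨by simp only [ht]; linarith, by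
        simp only [ht]; linarith [hdm.2]⟩
      have h3 : x (t - 2*π + 2*π) = x (t - 2*π) := hpx (t - 2*π)
      rw [show t - 2*π + 2*π = t by ring] at h3
      simp only [hy0] at h1
      linarith
  
end Helpers

/-- for `β ∈ (0,1)` the monodromy matrix is 1-nondegenerate, and the only
2π-periodic solution of `x'' = -x + βx/(1+e cos t)` is the zero solution. -/
theorem stmt_5 (β e : ℝ) (hβ : β ∈ Set.Ioo (0 : ℝ) 1) (he : e ∈ Set.Ico (0 : ℝ) 1)
    (γ : ℝ → Matrix (Fin 2) (Fin 2) ℝ) (hγ : IsFundSol β e γ) :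
    Matrix.det (γ (2 * π) - 1) ≠ 0 ∧
    ∀ x x' : ℝ → ℝ,
      (∀ t, HasDerivAt x (x' t) t) →
      (∀ t, HasDerivAt x' (-(x t) + β * x t / (1 + e * Real.cos t)) t) →
      x (2 * π) = x 0 → x' (2 * π) = x' 0 →
      ∀ t, x t = 0 := by
  obtain ⟨hβ0, hβ1⟩ := hβ
  obtain ⟨he0, he1⟩ := he
  constructor
  · intro hdet
    obtain ⟨v, hv0, hvker⟩ := Matrix.exists_mulVec_eq_zero_iff.2 hdet
    rw [Matrix.sub_mulVec, Matrix.one_mulVec, sub_eq_zero] at hvker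
    have hfix : ∀ i, (γ (2*π)).mulVec v i = v i := fun i => congrFun hvker i
    set x : ℝ → ℝ := fun t => γ t 1 0 * v 0 + γ t 1 1 * v 1 with hxdef
    set xp : ℝ → ℝ := fun t => γ t 0 0 * v 0 + γ t 0 1 * v 1 with hxpdef
    have hrow1 : ∀ (t : ℝ) (j : Fin 2), (Jmat * Bmat β e t * γ t) 1 j = γ t 0 j := by
      intro t j
      simp [Jmat, Bmat, Matrix.mul_apply, Fin.sum_univ_two]
    have hrow0 : ∀ (t : ℝ) (j : Fin 2), (Jmat * Bmat β e t * γ t) 0 j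
        = -(1 - β / (1 + e * Real.cos t)) * γ t 1 j := by
      intro t j
      simp [Jmat, Bmat, Matrix.mul_apply, Fin.sum_univ_two]
    have hdx : ∀ t, HasDerivAt x (xp t) t := by
      intro t
      have := ((hγ.2 t 1 0).mul_const (v 0)).add ((hγ.2 t 1 1).mul_const (v 1))
      rw [hrow1 t 0, hrow1 t 1] at this
      exact this
    have hdxp : ∀ t, HasDerivAt xp (-(x t) + β * x t / (1 + e * Real.cos t)) t := by
      intro t
      have hr := (rpos he0 he1 t).ne'
      have := ((hγ.2 t 0 0).mul_const (v 0)).add ((hγ.2 t 0 1).mul_const (v 1))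
      rw [hrow0 t 0, hrow0 t 1] at this
      refine this.congr_deriv ?_
      field_simp
      ring
    have h2x : x (2*π) = v 1 := by
      have := hfix 1
      simpa [Matrix.mulVec, dotProduct, Fin.sum_univ_two, hxdef] using this
    have h0x : x 0 = v 1 := by
      simp [hxdef, hγ.1, Matrix.one_apply]
    have h2xp : xp (2*π) = v 0 := by
      have := hfix 0
      simpa [Matrix.mulVec, dotProduct, Fin.sum_univ_two, hxpdef] using this
    have h0xp : xp 0 = v 0 := by
      simp [hxpdef, hγ.1, Matrix.one_apply]
    have hzero := core hβ0 hβ1 he0 he1 hdx hdxp (h2x.trans h0x.symm) (h2xp.trans h0xp.symm)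
    have hv1 : v 1 = 0 := by rw [← h0x]; exact hzero 0
    have hvA : v 0 = 0 := by
      have hxp0 : xp 0 = 0 := by
        have hconst : HasDerivAt x 0 0 := by
          have : x = fun _ => (0:ℝ) := funext hzero
          rw [this]
          exact hasDerivAt_const 0 0
        exact (HasDerivAt.unique (hdx 0) hconst)
      rw [← h0xp]; exact hxp0
    apply hv0
    funext i
    fin_cases i
    · exact hvA
    · exact hv1
  · intro x x' h1 h2 h3 h4
    exact core hβ0 hβ1 he0 he1 h1 h2 h3 h4

end
end

section
/- Fix e ∈ [0,1). A twice-differentiable function x : ℝ → ℝ with x(2π) = x(0) and x'(2π) = x'(0) satisfies x''(t) = −x(t) + x(t)/(1 + e cos t) for all t ∈ [0,2π] if and only if x(t) = c·(1 + e cos t) for some constant c ∈ ℝ. In particular, the 2π-periodic solution space of this equation (the case β = 1) is exactly the one-dimensional span of 1 + e cos t. -/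
open Real

/-- for `β = 1`, a twice-differentiable function with periodic boundary
conditions solves `x'' = -x + x/(1+e cos t)` iff `x(t) = c (1 + e cos t)`;
the periodic solution space is exactly the span of `1 + e cos t`. -/
theorem stmt_13 (e : ℝ) (he : e ∈ Set.Ico (0 : ℝ) 1)
    (x x' x'' : ℝ → ℝ)
    (hx : ∀ t, HasDerivAt x (x' t) t)
    (hx' : ∀ t, HasDerivAt x' (x'' t) t)
    (hbc1 : x (2 * π) = x 0) (hbc2 : x' (2 * π) = x' 0) :
    (∀ t, x'' t = -(x t) + x t / (1 + e * Real.cos t)) ↔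
      ∃ c : ℝ, ∀ t, x t = c * (1 + e * Real.cos t) := by
  obtain ⟨he0, he1⟩ := he
  have hpos : ∀ t, 0 < 1 + e * Real.cos t := by
    intro t
    nlinarith [Real.neg_one_le_cos t, Real.cos_le_one t]
  have hne : ∀ t, (1 + e * Real.cos t) ≠ 0 := fun t => ne_of_gt (hpos t)
  have hφ : ∀ t : ℝ, HasDerivAt (fun s => 1 + e * Real.cos s) (e * -Real.sin t) t := by
    intro t
    exact ((Real.hasDerivAt_cos t).const_mul e).const_add (1:ℝ)
  constructor
  · intro heq
    -- Wronskian
    set W : ℝ → ℝ := fun t => x' t * (1 + e * Real.cos t) - x t * (e * -Real.sin t) with hW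
    have hWd : ∀ t, HasDerivAt W 0 t := by
      intro t
      have h1 : HasDerivAt (fun s => x' s * (1 + e * Real.cos s))
          (x'' t * (1 + e * Real.cos t) + x' t * (e * -Real.sin t)) t :=
        (hx' t).mul (hφ t)
      have hsin : HasDerivAt (fun s => e * -Real.sin s) (e * -Real.cos t) t := by
        have := ((Real.hasDerivAt_sin t).neg).const_mul e
        simpa using this
      have h2 : HasDerivAt (fun s => x s * (e * -Real.sin s))
          (x' t * (e * -Real.sin t) + x t * (e * -Real.cos t)) t :=
        (hx t).mul hsin
      have := h1.sub h2
      have hval : x'' t * (1 + e * Real.cos t) + x' t * (e * -Real.sin t) -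
          (x' t * (e * -Real.sin t) + x t * (e * -Real.cos t)) = 0 := by
        rw [heq t]
        field_simp [hne t]
        ring
      rw [hval] at this
      exact this
    have hWc : ∀ t, W t = W 0 := by
      intro t
      exact is_const_of_deriv_eq_zero (fun s => (hWd s).differentiableAt)
        (fun s => (hWd s).deriv) t 0
    -- the ratio u = x / φ
    set u : ℝ → ℝ := fun t => x t / (1 + e * Real.cos t) with hu
    have hud : ∀ t, HasDerivAt u (W 0 / (1 + e * Real.cos t) ^ 2) t := by
      intro t
      have := (hx t).div (hφ t) (hne t)
      have hv : (x' t * (1 + e * Real.cos t) - x t * (e * -Real.sin t)) /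
          (1 + e * Real.cos t) ^ 2 = W 0 / (1 + e * Real.cos t) ^ 2 := by
        rw [← hWc t]
      rwa [hv] at this
    have huper : u (2 * π) = u 0 := by
      simp only [hu, Real.cos_two_pi, Real.cos_zero, hbc1]
    have h2pi : (0:ℝ) < 2 * π := by positivity
    rcases lt_trichotomy (W 0) 0 with hw | hw | hw
    · exfalso
      have : StrictAnti u := strictAnti_of_hasDerivAt_neg hud
        (fun t => div_neg_of_neg_of_pos hw (pow_pos (hpos t) 2))
      exact absurd huper (ne_of_lt (this h2pi))
    · refine ⟨u 0, fun t => ?_⟩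
      have hc : u t = u 0 := by
        refine is_const_of_deriv_eq_zero (fun s => (hud s).differentiableAt)
          (fun s => ?_) t 0
        rw [(hud s).deriv, hw, zero_div]
      rw [hu] at hc
      exact (div_eq_iff (hne t)).mp hc
    · exfalso
      have : StrictMono u := strictMono_of_hasDerivAt_pos hud
        (fun t => div_pos hw (pow_pos (hpos t) 2))
      exact absurd huper (ne_of_gt (this h2pi))
  · rintro ⟨c, hc⟩ t
    have hxeq : x = fun s => c * (1 + e * Real.cos s) := funext hc
    have hxd : HasDerivAt x (c * (e * -Real.sin t)) t := by
      rw [hxeq]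
      exact ((hφ t).const_mul c)
    have hx'eq : x' t = c * (e * -Real.sin t) := (hx t).unique hxd
    have hx'd : ∀ s, x' s = c * (e * -Real.sin s) := by
      intro s
      have hxd : HasDerivAt x (c * (e * -Real.sin s)) s := by
        rw [hxeq]; exact ((hφ s).const_mul c)
      exact (hx s).unique hxd
    have hx'fun : x' = fun s => c * (e * -Real.sin s) := funext hx'd
    have hx''d : HasDerivAt x' (c * (e * -Real.cos t)) t := by
      rw [hx'fun]
      have := ((Real.hasDerivAt_sin t).neg).const_mul e
      exact (by simpa using this : HasDerivAt (fun s => e * -Real.sin s) (e * -Real.cos t) t).const_mul c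
    have hx''eq : x'' t = c * (e * -Real.cos t) := (hx' t).unique hx''d
    rw [hx''eq, hc t, mul_div_assoc, div_self (hne t)]
    ring
end

section
/- Fix e ∈ [0,1) and suppose β₁ < β₂ in (0,1) are such that, for β ∈ [0,1], det(γ_{β,e}(2π) + I₂) = 0 holds exactly when β ∈ {β₁, β₂}. Then for every β with β₁ < β < β₂, the monodromy matrix γ_{β,e}(2π) has a real eigenvalue μ with μ < −1 (equivalently, tr γ_{β,e}(2π) < −2); in particular sup_{n∈ℕ} ‖γ_{β,e}(2π)ⁿ‖ = ∞, so γ_{β,e}(2π) is linearly unstable. -/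
open Real Matrix

attribute [local instance] Matrix.normedAddCommGroup

noncomputable section

namespace Stmt14


lemma abs_cos_sub_cos_le (a b : ℝ) : |Real.cos a - Real.cos b| ≤ |a - b| := by
  rw [Real.cos_sub_cos]
  have h1 : |Real.sin ((a + b) / 2)| ≤ 1 :=
    abs_le.mpr ⟨Real.neg_one_le_sin _, Real.sin_le_one _⟩
  have h2 : |Real.sin ((a - b) / 2)| ≤ |(a - b) / 2| := Real.abs_sin_le_abs
  have h3 : |(a - b) / 2| = |a - b| / 2 := by rw [abs_div]; norm_num
  calc |(-2) * Real.sin ((a + b) / 2) * Real.sin ((a - b) / 2)|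
      = 2 * (|Real.sin ((a + b) / 2)| * |Real.sin ((a - b) / 2)|) := by
        rw [abs_mul, abs_mul]; norm_num; ring
    _ ≤ 2 * (1 * (|a - b| / 2)) := by
        apply mul_le_mul_of_nonneg_left _ (by norm_num)
        exact mul_le_mul h1 (h3 ▸ h2) (abs_nonneg _) zero_le_one
    _ = |a - b| := by ring

lemma abs_sin_sq_sub_sin_sq (a b : ℝ) :
    |Real.sin a ^ 2 - Real.sin b ^ 2| ≤ |a - b| := by
  have key : Real.sin a ^ 2 - Real.sin b ^ 2 = (Real.cos (2 * b) - Real.cos (2 * a)) / 2 := by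
    rw [Real.cos_two_mul, Real.cos_two_mul]
    have ha := Real.sin_sq_add_cos_sq a
    have hb := Real.sin_sq_add_cos_sq b
    nlinarith
  rw [key]
  have := abs_cos_sub_cos_le (2 * b) (2 * a)
  have h2 : |2 * b - 2 * a| = 2 * |a - b| := by
    rw [show (2 : ℝ) * b - 2 * a = -(2 * (a - b)) by ring, abs_neg, abs_mul]
    norm_num
  rw [abs_div]
  norm_num
  linarith [abs_cos_sub_cos_le (2 * b) (2 * a), h2.symm.le]

/-- One-sided Gronwall-type lemma. -/
lemma nonpos_of_deriv_le (L : ℝ) {h h' : ℝ → ℝ}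
    (hd : ∀ t, HasDerivAt h (h' t) t)
    (h0 : h 0 ≤ 0)
    (hle : ∀ t, 0 ≤ t → 0 < h t → h' t ≤ L * h t) :
    ∀ T, 0 ≤ T → h T ≤ 0 := by
  intro T hT
  by_contra hpos
  push_neg at hpos
  have hcont : Continuous h := by
    rw [continuous_iff_continuousAt]; exact fun t => (hd t).continuousAt
  set S : Set ℝ := {t | h t ≤ 0} ∩ Set.Icc 0 T with hSdef
  have hSc : IsCompact S :=
    isCompact_Icc.inter_left (isClosed_le hcont continuous_const)
  have hne : S.Nonempty := ⟨0, h0, le_refl 0, hT⟩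
  set t₀ := sSup S with ht₀def
  have ht₀S : t₀ ∈ S := hSc.sSup_mem hne
  have ht₀T : t₀ ≤ T := ht₀S.2.2
  have ht₀0 : 0 ≤ t₀ := ht₀S.2.1
  have ht₀lt : t₀ < T := by
    rcases lt_or_eq_of_le ht₀T with h | h
    · exact h
    · exfalso; rw [h] at ht₀S; exact absurd ht₀S.1 (not_le.mpr hpos)
  have hmid : ∀ s, t₀ < s → s ≤ T → 0 < h s := by
    intro s hs hsT
    by_contra hns; push_neg at hns
    have hsS : s ∈ S := ⟨hns, le_trans ht₀0 hs.le, hsT⟩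
    exact absurd (le_csSup hSc.bddAbove hsS) (not_le.mpr hs)
  set φ : ℝ → ℝ := fun t => h t * Real.exp (-L * t) with hφdef
  have hφd : ∀ t, HasDerivAt φ ((h' t - L * h t) * Real.exp (-L * t)) t := by
    intro t
    have he' : HasDerivAt (fun t => Real.exp (-L * t)) (Real.exp (-L * t) * -L) t := by
      have := ((hasDerivAt_id t).const_mul (-L)).exp
      simpa using this
    have := (hd t).mul he'
    refine this.congr_deriv (Eq.symm ?_)
    ring
  have hanti : AntitoneOn φ (Set.Icc t₀ T) := by
    apply antitoneOn_of_deriv_nonpos (convex_Icc _ _)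
    · exact (hcont.mul (Real.continuous_exp.comp (continuous_const.mul continuous_id))).continuousOn
    · intro x _
      exact ((hφd x).differentiableAt).differentiableWithinAt
    · intro x hx
      rw [interior_Icc] at hx
      rw [(hφd x).deriv]
      have hx0 : 0 < h x := hmid x hx.1 hx.2.le
      have h1 := hle x (le_trans ht₀0 hx.1.le) hx0
      have h2 : h' x - L * h x ≤ 0 := by linarith
      exact mul_nonpos_of_nonpos_of_nonneg h2 (Real.exp_nonneg _)
  have h1 : φ T ≤ φ t₀ :=
    hanti ⟨le_refl _, ht₀T⟩ ⟨ht₀T, le_refl _⟩ ht₀T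
  have h2 : φ t₀ ≤ 0 :=
    mul_nonpos_of_nonpos_of_nonneg ht₀S.1 (Real.exp_nonneg _)
  have h3 : 0 < φ T := mul_pos hpos (Real.exp_pos _)
  linarith

/-- Barrier lemma: if the derivative is positive at zeros of θ, θ stays positive. -/
lemma theta_stays_pos {θ d : ℝ → ℝ}
    (hd : ∀ t, HasDerivAt θ (d t) t)
    (hdval : ∀ t, θ t = 0 → 0 < d t)
    (h0 : 0 < θ 0) :
    ∀ t, 0 ≤ t → 0 < θ t := by
  intro T hT
  by_contra hn; push_neg at hn
  have hcont : Continuous θ := by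
    rw [continuous_iff_continuousAt]; exact fun t => (hd t).continuousAt
  set S : Set ℝ := {s | θ s ≤ 0} ∩ Set.Icc 0 T with hSdef
  have hSc : IsCompact S :=
    isCompact_Icc.inter_left (isClosed_le hcont continuous_const)
  have hne : S.Nonempty := ⟨T, hn, hT, le_refl _⟩
  set t₀ := sInf S with ht₀def
  have ht₀S : t₀ ∈ S := hSc.sInf_mem hne
  have ht₀0 : 0 ≤ t₀ := ht₀S.2.1
  have ht₀T : t₀ ≤ T := ht₀S.2.2
  have hbefore : ∀ s, 0 ≤ s → s < t₀ → 0 < θ s := by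
    intro s hs0 hs
    by_contra hns; push_neg at hns
    have hsS : s ∈ S := ⟨hns, hs0, le_trans hs.le ht₀T⟩
    exact absurd (csInf_le hSc.bddBelow hsS) (not_le.mpr hs)
  have hθt₀ : θ t₀ = 0 := by
    rcases lt_or_eq_of_le (show θ t₀ ≤ 0 from ht₀S.1) with hlt | heq
    · exfalso
      have h0le : (0 : ℝ) ∈ Set.Icc (θ t₀) (θ 0) := ⟨hlt.le, h0.le⟩
      obtain ⟨s, hsmem, hs0⟩ := intermediate_value_Icc' ht₀0 hcont.continuousOn h0le
      have hsS : s ∈ S := ⟨hs0.le, hsmem.1, le_trans hsmem.2 ht₀T⟩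
      have : t₀ ≤ s := csInf_le hSc.bddBelow hsS
      have hslt : s < t₀ := lt_of_le_of_ne hsmem.2 (by rintro rfl; rw [hs0] at hlt; exact lt_irrefl _ hlt)
      exact absurd this (not_le.mpr hslt)
    · exact heq
  have ht₀pos : 0 < t₀ := by
    rcases lt_or_eq_of_le ht₀0 with h | h
    · exact h
    · exfalso; rw [← h] at hθt₀; rw [hθt₀] at h0; exact lt_irrefl _ h0
  have hdpos : 0 < d t₀ := hdval t₀ hθt₀
  have hslope := hasDerivAt_iff_tendsto_slope.mp (hd t₀)
  have hev : ∀ᶠ x in nhdsWithin t₀ {t₀}ᶜ, 0 < slope θ t₀ x :=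
    hslope (Ioi_mem_nhds hdpos)
  have hmono : nhdsWithin t₀ (Set.Iio t₀) ≤ nhdsWithin t₀ {t₀}ᶜ :=
    nhdsWithin_mono _ (fun x (hx : x ∈ Set.Iio t₀) => (ne_of_lt hx : x ≠ t₀))
  have hev2 : ∀ᶠ x in nhdsWithin t₀ (Set.Iio t₀), 0 < x :=
    eventually_nhdsWithin_of_eventually_nhds (eventually_gt_nhds ht₀pos)
  have hev3 : ∀ᶠ x in nhdsWithin t₀ (Set.Iio t₀), x ∈ Set.Iio t₀ :=
    eventually_mem_nhdsWithin
  obtain ⟨x, hx1, hx2, hx3⟩ := ((hev.filter_mono hmono).and (hev2.and hev3)).exists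
  have hxlt : x < t₀ := hx3
  have hslopeval : slope θ t₀ x = θ x / (x - t₀) := by
    rw [slope_def_field, hθt₀]; ring_nf
  rw [hslopeval] at hx1
  have hneg : x - t₀ < 0 := by linarith
  have hθx : θ x < 0 := by
    by_contra hc; push_neg at hc
    have : θ x / (x - t₀) ≤ 0 := div_nonpos_of_nonneg_of_nonpos hc hneg.le
    linarith
  exact absurd (hbefore x hx2.le hxlt) (not_lt.mpr hθx.le)

/-- Comparison theorem for the Prüfer angle ODE. -/
lemma theta_le {ka kb θa θb : ℝ → ℝ} {L : ℝ}
    (ha : ∀ t, HasDerivAt θa (Real.cos (θa t) ^ 2 + ka t * Real.sin (θa t) ^ 2) t)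
    (hb : ∀ t, HasDerivAt θb (Real.cos (θb t) ^ 2 + kb t * Real.sin (θb t) ^ 2) t)
    (hk : ∀ t, kb t ≤ ka t)
    (hL : ∀ t, |ka t - 1| ≤ L)
    (h0 : θb 0 ≤ θa 0) : ∀ T, 0 ≤ T → θb T ≤ θa T := by
  intro T hT
  have key := nonpos_of_deriv_le L (h := fun t => θb t - θa t)
    (h' := fun t => (Real.cos (θb t) ^ 2 + kb t * Real.sin (θb t) ^ 2) -
      (Real.cos (θa t) ^ 2 + ka t * Real.sin (θa t) ^ 2))
    (fun t => (hb t).sub (ha t)) (by simpa using h0) ?_ T hT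
  · linarith
  intro t _ hpos
  have step1 : Real.cos (θb t) ^ 2 + kb t * Real.sin (θb t) ^ 2 ≤
      Real.cos (θb t) ^ 2 + ka t * Real.sin (θb t) ^ 2 := by
    have := hk t
    nlinarith [sq_nonneg (Real.sin (θb t))]
  have step2 : Real.cos (θb t) ^ 2 + ka t * Real.sin (θb t) ^ 2 -
      (Real.cos (θa t) ^ 2 + ka t * Real.sin (θa t) ^ 2) =
      (ka t - 1) * (Real.sin (θb t) ^ 2 - Real.sin (θa t) ^ 2) := by
    have h1 := Real.sin_sq_add_cos_sq (θb t)
    have h2 := Real.sin_sq_add_cos_sq (θa t)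
    nlinarith
  have step3 : (ka t - 1) * (Real.sin (θb t) ^ 2 - Real.sin (θa t) ^ 2) ≤
      L * (θb t - θa t) := by
    calc (ka t - 1) * (Real.sin (θb t) ^ 2 - Real.sin (θa t) ^ 2)
        ≤ |(ka t - 1) * (Real.sin (θb t) ^ 2 - Real.sin (θa t) ^ 2)| := le_abs_self _
      _ = |ka t - 1| * |Real.sin (θb t) ^ 2 - Real.sin (θa t) ^ 2| := abs_mul _ _
      _ ≤ L * |θb t - θa t| := by
          apply mul_le_mul (hL t) (abs_sin_sq_sub_sin_sq _ _) (abs_nonneg _)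
          exact le_trans (abs_nonneg _) (hL t)
      _ = L * (θb t - θa t) := by rw [abs_of_pos hpos]
  linarith

/-- Upper bound: the angle advances at speed at most 1 when `k ≤ 1`. -/
lemma theta_upper {θ k : ℝ → ℝ}
    (hd : ∀ t, HasDerivAt θ (Real.cos (θ t) ^ 2 + k t * Real.sin (θ t) ^ 2) t)
    (hk : ∀ t, k t ≤ 1) : ∀ T, 0 ≤ T → θ T ≤ θ 0 + T := by
  intro T hT
  have key := nonpos_of_deriv_le 0 (h := fun t => θ t - θ 0 - t)
    (h' := fun t => (Real.cos (θ t) ^ 2 + k t * Real.sin (θ t) ^ 2) - 1)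
    (fun t => ((hd t).sub_const _).sub (hasDerivAt_id t)) (by simp) ?_ T hT
  · linarith
  intro t _ _
  have h1 := Real.sin_sq_add_cos_sq (θ t)
  have := hk t
  nlinarith [sq_nonneg (Real.sin (θ t))]



def kf (β e t : ℝ) : ℝ := 1 - β / (1 + e * Real.cos t)

lemma JB_entry (β e t : ℝ) (M : Matrix (Fin 2) (Fin 2) ℝ) (j : Fin 2) :
    (Jmat * Bmat β e t * M) 0 j = -(kf β e t * M 1 j) ∧
    (Jmat * Bmat β e t * M) 1 j = M 0 j := by
  have h : Jmat * Bmat β e t = !![0, -(kf β e t); 1, 0] := by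
    rw [Jmat, Bmat, Matrix.mul_fin_two]
    norm_num [kf]
  rw [h]
  constructor <;>
  · simp [Matrix.mul_apply, Fin.sum_univ_two]

lemma hasDerivAt_row0 {β e : ℝ} {γ : ℝ → Matrix (Fin 2) (Fin 2) ℝ}
    (hsol : IsFundSol β e γ) (t : ℝ) (j : Fin 2) :
    HasDerivAt (fun s => γ s 0 j) (-(kf β e t * γ t 1 j)) t := by
  have := hsol.2 t 0 j
  rwa [(JB_entry β e t (γ t) j).1] at this

lemma hasDerivAt_row1 {β e : ℝ} {γ : ℝ → Matrix (Fin 2) (Fin 2) ℝ}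
    (hsol : IsFundSol β e γ) (t : ℝ) (j : Fin 2) :
    HasDerivAt (fun s => γ s 1 j) (γ t 0 j) t := by
  have := hsol.2 t 1 j
  rwa [(JB_entry β e t (γ t) j).2] at this

lemma continuous_entry {β e : ℝ} {γ : ℝ → Matrix (Fin 2) (Fin 2) ℝ}
    (hsol : IsFundSol β e γ) (i j : Fin 2) :
    Continuous (fun s => γ s i j) := by
  rw [continuous_iff_continuousAt]
  intro t
  fin_cases i
  · exact (hasDerivAt_row0 hsol t j).continuousAt
  · exact (hasDerivAt_row1 hsol t j).continuousAt

lemma det_gamma {β e : ℝ} {γ : ℝ → Matrix (Fin 2) (Fin 2) ℝ}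
    (hsol : IsFundSol β e γ) (t : ℝ) : (γ t).det = 1 := by
  set D : ℝ → ℝ := fun s => γ s 0 0 * γ s 1 1 - γ s 0 1 * γ s 1 0 with hD
  have hder : ∀ s, HasDerivAt D 0 s := by
    intro s
    have h00 := hasDerivAt_row0 hsol s 0
    have h01 := hasDerivAt_row0 hsol s 1
    have h10 := hasDerivAt_row1 hsol s 0
    have h11 := hasDerivAt_row1 hsol s 1
    have := ((h00.mul h11).sub (h01.mul h10))
    refine this.congr_deriv (Eq.symm ?_)
    ring
  have hconst : D t = D 0 :=
    is_const_of_deriv_eq_zero (fun s => (hder s).differentiableAt)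
      (fun s => (hder s).deriv) t 0
  have hD0 : D 0 = 1 := by
    simp [hD, hsol.1, Matrix.one_apply]
  rw [Matrix.det_fin_two]
  rw [show γ t 0 0 * γ t 1 1 - γ t 0 1 * γ t 1 0 = D t from rfl, hconst, hD0]

/-! ### denominator bounds -/

lemma denom_pos {e : ℝ} (he0 : 0 ≤ e) (he1 : e < 1) (t : ℝ) :
    0 < 1 + e * Real.cos t := by
  nlinarith [Real.neg_one_le_cos t, Real.cos_le_one t]

lemma kf_le_one {β e : ℝ} (hβ0 : 0 ≤ β) (he0 : 0 ≤ e) (he1 : e < 1) (t : ℝ) :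
    kf β e t ≤ 1 := by
  have := denom_pos he0 he1 t
  have : 0 ≤ β / (1 + e * Real.cos t) := div_nonneg hβ0 this.le
  simp only [kf]; linarith

lemma abs_kf_sub_one {β e : ℝ} (hβ0 : 0 ≤ β) (hβ1 : β ≤ 1) (he0 : 0 ≤ e) (he1 : e < 1)
    (t : ℝ) : |kf β e t - 1| ≤ 1 / (1 - e) := by
  have hd := denom_pos he0 he1 t
  have hd2 : 1 - e ≤ 1 + e * Real.cos t := by
    nlinarith [Real.neg_one_le_cos t]
  have h1 : kf β e t - 1 = -(β / (1 + e * Real.cos t)) := by simp [kf]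
  rw [h1, abs_neg, abs_of_nonneg (div_nonneg hβ0 hd.le)]
  exact div_le_div₀ zero_le_one hβ1 (by linarith) hd2

lemma kf_anti {β β' e : ℝ} (hle : β ≤ β') (he0 : 0 ≤ e) (he1 : e < 1) (t : ℝ) :
    kf β' e t ≤ kf β e t := by
  have hd := denom_pos he0 he1 t
  have h : β / (1 + e * Real.cos t) ≤ β' / (1 + e * Real.cos t) :=
    (div_le_div_iff_of_pos_right hd).mpr hle
  simp only [kf]; linarith


lemma continuous_kf {β e : ℝ} (he0 : 0 ≤ e) (he1 : e < 1) :
    Continuous (kf β e) := by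
  apply continuous_const.sub
  exact continuous_const.div (continuous_const.add (continuous_const.mul Real.continuous_cos))
    (fun t => (denom_pos he0 he1 t).ne')

/-! ### the complex solution and its polar representation -/

def xc (γ : ℝ → Matrix (Fin 2) (Fin 2) ℝ) (φ : ℝ) (i : Fin 2) (t : ℝ) : ℝ :=
  γ t i 0 * Real.cos φ + γ t i 1 * Real.sin φ

def zc (γ : ℝ → Matrix (Fin 2) (Fin 2) ℝ) (φ : ℝ) (t : ℝ) : ℂ :=
  (xc γ φ 0 t : ℂ) + (xc γ φ 1 t : ℂ) * Complex.I

def zdc (β e : ℝ) (γ : ℝ → Matrix (Fin 2) (Fin 2) ℝ) (φ : ℝ) (t : ℝ) : ℂ :=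
  ((-(kf β e t) * xc γ φ 1 t : ℝ) : ℂ) + (xc γ φ 0 t : ℂ) * Complex.I

def Fc (β e : ℝ) (γ : ℝ → Matrix (Fin 2) (Fin 2) ℝ) (φ : ℝ) (t : ℝ) : ℂ :=
  ∫ s in (0:ℝ)..t, zdc β e γ φ s / zc γ φ s

def θc (β e : ℝ) (γ : ℝ → Matrix (Fin 2) (Fin 2) ℝ) (φ : ℝ) (t : ℝ) : ℝ :=
  φ + (Fc β e γ φ t).im

lemma zc_re (γ : ℝ → Matrix (Fin 2) (Fin 2) ℝ) (φ t : ℝ) :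
    (zc γ φ t).re = xc γ φ 0 t := by simp [zc]

lemma zc_im (γ : ℝ → Matrix (Fin 2) (Fin 2) ℝ) (φ t : ℝ) :
    (zc γ φ t).im = xc γ φ 1 t := by simp [zc]

lemma zdc_re (β e : ℝ) (γ : ℝ → Matrix (Fin 2) (Fin 2) ℝ) (φ t : ℝ) :
    (zdc β e γ φ t).re = -(kf β e t) * xc γ φ 1 t := by simp [zdc]

lemma zdc_im (β e : ℝ) (γ : ℝ → Matrix (Fin 2) (Fin 2) ℝ) (φ t : ℝ) :
    (zdc β e γ φ t).im = xc γ φ 0 t := by simp [zdc]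

lemma hasDerivAt_xc0 {β e : ℝ} {γ : ℝ → Matrix (Fin 2) (Fin 2) ℝ}
    (hsol : IsFundSol β e γ) (φ t : ℝ) :
    HasDerivAt (xc γ φ 0) (-(kf β e t) * xc γ φ 1 t) t := by
  have h0 := (hasDerivAt_row0 hsol t 0).mul_const (Real.cos φ)
  have h1 := (hasDerivAt_row0 hsol t 1).mul_const (Real.sin φ)
  have := h0.add h1
  refine this.congr_deriv (Eq.symm ?_)
  simp [xc]; ring

lemma hasDerivAt_xc1 {β e : ℝ} {γ : ℝ → Matrix (Fin 2) (Fin 2) ℝ}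
    (hsol : IsFundSol β e γ) (φ t : ℝ) :
    HasDerivAt (xc γ φ 1) (xc γ φ 0 t) t := by
  have h0 := (hasDerivAt_row1 hsol t 0).mul_const (Real.cos φ)
  have h1 := (hasDerivAt_row1 hsol t 1).mul_const (Real.sin φ)
  have := h0.add h1
  exact this

lemma hasDerivAt_zc {β e : ℝ} {γ : ℝ → Matrix (Fin 2) (Fin 2) ℝ}
    (hsol : IsFundSol β e γ) (φ t : ℝ) :
    HasDerivAt (zc γ φ) (zdc β e γ φ t) t := by
  have h0 := (hasDerivAt_xc0 hsol φ t).ofReal_comp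
  have h1 := ((hasDerivAt_xc1 hsol φ t).ofReal_comp).mul_const Complex.I
  have := h0.add h1
  exact this

lemma continuous_xc {β e : ℝ} {γ : ℝ → Matrix (Fin 2) (Fin 2) ℝ}
    (hsol : IsFundSol β e γ) (φ : ℝ) (i : Fin 2) :
    Continuous (xc γ φ i) :=
  ((continuous_entry hsol i 0).mul continuous_const).add
    ((continuous_entry hsol i 1).mul continuous_const)

lemma continuous_zc {β e : ℝ} {γ : ℝ → Matrix (Fin 2) (Fin 2) ℝ}
    (hsol : IsFundSol β e γ) (φ : ℝ) : Continuous (zc γ φ) :=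
  ((Complex.continuous_ofReal.comp (continuous_xc hsol φ 0))).add
    (((Complex.continuous_ofReal.comp (continuous_xc hsol φ 1))).mul continuous_const)

lemma continuous_zdc {β e : ℝ} {γ : ℝ → Matrix (Fin 2) (Fin 2) ℝ}
    (hsol : IsFundSol β e γ) (he0 : 0 ≤ e) (he1 : e < 1) (φ : ℝ) :
    Continuous (zdc β e γ φ) := by
  apply Continuous.add
  · exact Complex.continuous_ofReal.comp
      (((continuous_kf he0 he1).neg).mul (continuous_xc hsol φ 1))
  · exact (Complex.continuous_ofReal.comp (continuous_xc hsol φ 0)).mul continuous_const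

lemma vec_ne_zero (φ : ℝ) : ![Real.cos φ, Real.sin φ] ≠ 0 := by
  intro h
  have h0 : Real.cos φ = 0 := by
    have := congrFun h 0; simpa using this
  have h1 : Real.sin φ = 0 := by
    have := congrFun h 1; simpa using this
  have := Real.sin_sq_add_cos_sq φ
  rw [h0, h1] at this; norm_num at this

lemma mulVec_eq_xc (γ : ℝ → Matrix (Fin 2) (Fin 2) ℝ) (φ t : ℝ) (i : Fin 2) :
    ((γ t).mulVec ![Real.cos φ, Real.sin φ]) i = xc γ φ i t := by
  simp [Matrix.mulVec, dotProduct, Fin.sum_univ_two, xc]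

lemma zc_ne_zero {β e : ℝ} {γ : ℝ → Matrix (Fin 2) (Fin 2) ℝ}
    (hsol : IsFundSol β e γ) (φ t : ℝ) : zc γ φ t ≠ 0 := by
  intro h
  have h0 : xc γ φ 0 t = 0 := by rw [← zc_re γ φ t, h]; simp
  have h1 : xc γ φ 1 t = 0 := by rw [← zc_im γ φ t, h]; simp
  have hmv : (γ t).mulVec ![Real.cos φ, Real.sin φ] = 0 := by
    funext i
    rw [show (0 : Fin 2 → ℝ) i = 0 from rfl, mulVec_eq_xc]
    fin_cases i
    · exact h0
    · exact h1
  have hdet : (γ t).det = 0 :=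
    Matrix.exists_mulVec_eq_zero_iff.mp ⟨_, vec_ne_zero φ, hmv⟩
  rw [det_gamma hsol t] at hdet
  norm_num at hdet

lemma continuous_w {β e : ℝ} {γ : ℝ → Matrix (Fin 2) (Fin 2) ℝ}
    (hsol : IsFundSol β e γ) (he0 : 0 ≤ e) (he1 : e < 1) (φ : ℝ) :
    Continuous (fun s => zdc β e γ φ s / zc γ φ s) :=
  (continuous_zdc hsol he0 he1 φ).div (continuous_zc hsol φ)
    (fun t => zc_ne_zero hsol φ t)

lemma hasDerivAt_Fc {β e : ℝ} {γ : ℝ → Matrix (Fin 2) (Fin 2) ℝ}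
    (hsol : IsFundSol β e γ) (he0 : 0 ≤ e) (he1 : e < 1) (φ t : ℝ) :
    HasDerivAt (Fc β e γ φ) (zdc β e γ φ t / zc γ φ t) t := by
  have hc := continuous_w hsol he0 he1 φ
  exact intervalIntegral.integral_hasDerivAt_right (hc.intervalIntegrable 0 t)
    (hc.aestronglyMeasurable.stronglyMeasurableAtFilter)
    hc.continuousAt

lemma Fc_zero (β e : ℝ) (γ : ℝ → Matrix (Fin 2) (Fin 2) ℝ) (φ : ℝ) :
    Fc β e γ φ 0 = 0 := by
  simp [Fc]

lemma zc_rep {β e : ℝ} {γ : ℝ → Matrix (Fin 2) (Fin 2) ℝ}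
    (hsol : IsFundSol β e γ) (he0 : 0 ≤ e) (he1 : e < 1) (φ t : ℝ) :
    zc γ φ t = zc γ φ 0 * Complex.exp (Fc β e γ φ t) := by
  set u : ℝ → ℂ := fun s => zc γ φ s * Complex.exp (-(Fc β e γ φ s)) with hu
  have hud : ∀ s, HasDerivAt u 0 s := by
    intro s
    have h1 := hasDerivAt_zc hsol φ s
    have h2 := ((hasDerivAt_Fc hsol he0 he1 φ s).neg).cexp
    have := h1.mul h2
    refine this.congr_deriv (Eq.symm ?_)
    rw [mul_comm (zc γ φ s)]
    have hne := zc_ne_zero hsol φ s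
    field_simp
    ring
  have hconst : u t = u 0 :=
    is_const_of_deriv_eq_zero (fun s => (hud s).differentiableAt)
      (fun s => (hud s).deriv) t 0
  have hu0 : u 0 = zc γ φ 0 := by
    simp [hu, Fc_zero]
  have hconst' : zc γ φ t * Complex.exp (-(Fc β e γ φ t)) = zc γ φ 0 := by
    simpa [hu, Fc_zero] using hconst
  calc zc γ φ t = zc γ φ t * Complex.exp (-(Fc β e γ φ t)) * Complex.exp (Fc β e γ φ t) := by
        rw [mul_assoc, ← Complex.exp_add]; simp
    _ = zc γ φ 0 * Complex.exp (Fc β e γ φ t) := by rw [hconst']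


/-! ### polar representation -/

lemma zc_zero_eq {β e : ℝ} {γ : ℝ → Matrix (Fin 2) (Fin 2) ℝ}
    (hsol : IsFundSol β e γ) (φ : ℝ) :
    zc γ φ 0 = (Real.cos φ : ℂ) + (Real.sin φ : ℂ) * Complex.I := by
  simp [zc, xc, hsol.1, Matrix.one_apply]

lemma zc_polar {β e : ℝ} {γ : ℝ → Matrix (Fin 2) (Fin 2) ℝ}
    (hsol : IsFundSol β e γ) (he0 : 0 ≤ e) (he1 : e < 1) (φ t : ℝ) :
    zc γ φ t = (Real.exp ((Fc β e γ φ t).re) : ℂ) *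
      ((Real.cos (θc β e γ φ t) : ℂ) + (Real.sin (θc β e γ φ t) : ℂ) * Complex.I) := by
  have hrep := zc_rep hsol he0 he1 φ t
  rw [zc_zero_eq hsol φ] at hrep
  have hzc0 : (Real.cos φ : ℂ) + (Real.sin φ : ℂ) * Complex.I = Complex.exp (φ * Complex.I) := by
    rw [Complex.exp_mul_I]
    simp [Complex.ofReal_cos, Complex.ofReal_sin]
  rw [hzc0, ← Complex.exp_add] at hrep
  rw [hrep, Complex.exp_eq_exp_re_mul_sin_add_cos]
  have h1 : (↑φ * Complex.I + Fc β e γ φ t).re = (Fc β e γ φ t).re := by simp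
  have h2 : (↑φ * Complex.I + Fc β e γ φ t).im = θc β e γ φ t := by
    simp [θc]
  rw [h1, h2]
  simp only [← Complex.ofReal_exp, ← Complex.ofReal_cos, ← Complex.ofReal_sin]
  try ring

lemma xc0_polar {β e : ℝ} {γ : ℝ → Matrix (Fin 2) (Fin 2) ℝ}
    (hsol : IsFundSol β e γ) (he0 : 0 ≤ e) (he1 : e < 1) (φ t : ℝ) :
    xc γ φ 0 t = Real.exp ((Fc β e γ φ t).re) * Real.cos (θc β e γ φ t) := by
  have := congrArg Complex.re (zc_polar hsol he0 he1 φ t)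
  rw [zc_re] at this
  simpa [Complex.exp_ofReal_re, Complex.cos_ofReal_re] using this

lemma xc1_polar {β e : ℝ} {γ : ℝ → Matrix (Fin 2) (Fin 2) ℝ}
    (hsol : IsFundSol β e γ) (he0 : 0 ≤ e) (he1 : e < 1) (φ t : ℝ) :
    xc γ φ 1 t = Real.exp ((Fc β e γ φ t).re) * Real.sin (θc β e γ φ t) := by
  have := congrArg Complex.im (zc_polar hsol he0 he1 φ t)
  rw [zc_im] at this
  simpa [Complex.exp_ofReal_re, Complex.sin_ofReal_re] using this

/-! ### the angle ODE -/

lemma hasDerivAt_θc {β e : ℝ} {γ : ℝ → Matrix (Fin 2) (Fin 2) ℝ}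
    (hsol : IsFundSol β e γ) (he0 : 0 ≤ e) (he1 : e < 1) (φ t : ℝ) :
    HasDerivAt (θc β e γ φ)
      (Real.cos (θc β e γ φ t) ^ 2 + kf β e t * Real.sin (θc β e γ φ t) ^ 2) t := by
  have hF := hasDerivAt_Fc hsol he0 he1 φ t
  have him : HasDerivAt (fun s => (Fc β e γ φ s).im)
      ((zdc β e γ φ t / zc γ φ t).im) t :=
    (Complex.imCLM.hasFDerivAt.comp_hasDerivAt t hF.hasFDerivAt)
  have hθ : HasDerivAt (θc β e γ φ) ((zdc β e γ φ t / zc γ φ t).im) t := by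
    exact him.const_add φ
  convert hθ using 1
  -- identity : value of the derivative
  set R := Real.exp ((Fc β e γ φ t).re) with hR
  have hRpos : 0 < R := Real.exp_pos _
  have h0 := xc0_polar hsol he0 he1 φ t
  have h1 := xc1_polar hsol he0 he1 φ t
  rw [Complex.div_im, zdc_re, zdc_im, zc_re, zc_im, Complex.normSq_apply, zc_re, zc_im,
    h0, h1]
  have hs := Real.sin_sq_add_cos_sq (θc β e γ φ t)
  have hN : R * Real.cos (θc β e γ φ t) * (R * Real.cos (θc β e γ φ t)) +
      R * Real.sin (θc β e γ φ t) * (R * Real.sin (θc β e γ φ t)) = R ^ 2 := by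
    nlinarith
  rw [hN]
  field_simp
  ring

lemma θc_zero (β e : ℝ) (γ : ℝ → Matrix (Fin 2) (Fin 2) ℝ) (φ : ℝ) :
    θc β e γ φ 0 = φ := by
  simp [θc, Fc_zero]

/-! ### the eigen direction at a degenerate β -/

lemma deg_dir {γ : ℝ → Matrix (Fin 2) (Fin 2) ℝ}
    (hdeg : (γ (2 * π) + 1).det = 0) :
    ∃ φ ∈ Set.Ioc (0:ℝ) π,
      (γ (2 * π)).mulVec ![Real.cos φ, Real.sin φ] = -![Real.cos φ, Real.sin φ] := by
  obtain ⟨v, hv, hmv⟩ := Matrix.exists_mulVec_eq_zero_iff.mpr hdeg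
  have hMv : (γ (2 * π)).mulVec v = -v := by
    rw [Matrix.add_mulVec, Matrix.one_mulVec] at hmv
    funext i
    have h := congrFun hmv i
    simp only [Pi.add_apply, Pi.zero_apply] at h
    simp only [Pi.neg_apply]
    linarith
  set zv : ℂ := (v 0 : ℂ) + (v 1 : ℂ) * Complex.I with hzv
  have hzvne : zv ≠ 0 := by
    intro h
    apply hv
    have h0 : v 0 = 0 := by
      have := congrArg Complex.re h; simpa [hzv] using this
    have h1 : v 1 = 0 := by
      have := congrArg Complex.im h; simpa [hzv] using this
    funext i; fin_cases i
    · exact h0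
    · exact h1
  set r := ‖zv‖ with hr
  have hrpos : 0 < r := norm_pos_iff.mpr hzvne
  have hcos : Real.cos (Complex.arg zv) = v 0 / r := by
    rw [Complex.cos_arg hzvne]; simp [hzv, hr]
  have hsin : Real.sin (Complex.arg zv) = v 1 / r := by
    rw [Complex.sin_arg]; simp [hzv, hr]
  by_cases hpos : 0 < Complex.arg zv
  · refine ⟨Complex.arg zv, ⟨hpos, Complex.arg_le_pi zv⟩, ?_⟩
    have hvec : ![Real.cos (Complex.arg zv), Real.sin (Complex.arg zv)] = r⁻¹ • v := by
      funext i; fin_cases i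
      · simp [hcos, div_eq_inv_mul]
      · simp [hsin, div_eq_inv_mul]
    rw [hvec, Matrix.mulVec_smul, hMv]
    simp
  · push_neg at hpos
    refine ⟨Complex.arg zv + π, ⟨by linarith [Complex.neg_pi_lt_arg zv], by linarith⟩, ?_⟩
    have hvec : ![Real.cos (Complex.arg zv + π), Real.sin (Complex.arg zv + π)] =
        (-r⁻¹) • v := by
      funext i; fin_cases i
      · simp [Real.cos_add_pi, hcos, div_eq_inv_mul]
      · simp [Real.sin_add_pi, hsin, div_eq_inv_mul]
    rw [hvec, Matrix.mulVec_smul, hMv]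
    simp

/-- At a degenerate β there is an initial direction φ ∈ (0,π] whose angle advances exactly π. -/
lemma deg_theta {β e : ℝ} {γ : ℝ → Matrix (Fin 2) (Fin 2) ℝ}
    (hsol : IsFundSol β e γ) (he0 : 0 ≤ e) (he1 : e < 1) (hβ0 : 0 ≤ β)
    (hdeg : (γ (2 * π) + 1).det = 0) :
    ∃ φ ∈ Set.Ioc (0:ℝ) π, θc β e γ φ (2 * π) = φ + π := by
  obtain ⟨φ, hφ, heig⟩ := deg_dir (γ := γ) hdeg
  refine ⟨φ, hφ, ?_⟩
  -- z(2π) = -z(0)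
  have hx : ∀ i, xc γ φ i (2 * π) = -(![Real.cos φ, Real.sin φ] i) := by
    intro i
    rw [← mulVec_eq_xc, heig]
    simp
  have hz2 : zc γ φ (2 * π) = -(zc γ φ 0) := by
    rw [zc, zc_zero_eq hsol φ, hx 0, hx 1]
    simp
    ring
  have hrep := zc_rep hsol he0 he1 φ (2 * π)
  rw [hz2] at hrep
  have hzc0ne : zc γ φ 0 ≠ 0 := zc_ne_zero hsol φ 0
  have hexp : Complex.exp (Fc β e γ φ (2 * π)) = -1 := by
    have : zc γ φ 0 * Complex.exp (Fc β e γ φ (2 * π)) = zc γ φ 0 * (-1) := by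
      rw [← hrep]; ring
    exact mul_left_cancel₀ hzc0ne this
  have hexp1 : Complex.exp (Fc β e γ φ (2 * π) - π * Complex.I) = 1 := by
    rw [Complex.exp_sub, Complex.exp_pi_mul_I, hexp]
    norm_num
  obtain ⟨n, hn⟩ := Complex.exp_eq_one_iff.mp hexp1
  have him : (Fc β e γ φ (2 * π)).im = π + 2 * π * n := by
    have := congrArg Complex.im hn
    simp at this
    linarith
  -- bounds on the angle
  have hode := fun t => hasDerivAt_θc hsol he0 he1 φ t
  have hθ0 : θc β e γ φ 0 = φ := θc_zero β e γ φ
  have hπ : (0:ℝ) < π := Real.pi_pos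
  have hpos : 0 < θc β e γ φ (2 * π) := by
    apply theta_stays_pos hode ?_ (by rw [hθ0]; exact hφ.1) (2 * π) (by linarith)
    intro t ht
    rw [ht]
    simp
  have hupper : θc β e γ φ (2 * π) ≤ φ + 2 * π := by
    have := theta_upper hode (fun t => kf_le_one hβ0 he0 he1 t) (2 * π) (by linarith)
    rwa [hθ0] at this
  have hθval : θc β e γ φ (2 * π) = φ + π + 2 * π * n := by
    rw [θc, him]; ring
  have hn0 : n = 0 := by
    have hb1 : (n:ℝ) < 1 := by nlinarith [hφ.2]
    have hb2 : (-1:ℝ) < n := by nlinarith [hφ.1, hφ.2]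
    have : (-1:ℤ) < n := by exact_mod_cast hb2
    have : n < (1:ℤ) := by exact_mod_cast hb1
    omega
  rw [hθval, hn0]
  simp


/-- From a total angle advance of exactly π, produce a negative eigenvalue direction. -/
lemma eigen_of_theta {β e : ℝ} {γ : ℝ → Matrix (Fin 2) (Fin 2) ℝ}
    (hsol : IsFundSol β e γ) (he0 : 0 ≤ e) (he1 : e < 1) (φ : ℝ)
    (hθ : θc β e γ φ (2 * π) = φ + π) :
    (γ (2 * π)).mulVec ![Real.cos φ, Real.sin φ] =
      (-(Real.exp ((Fc β e γ φ (2 * π)).re))) • ![Real.cos φ, Real.sin φ] := by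
  funext i
  rw [mulVec_eq_xc]
  fin_cases i
  · rw [show xc γ φ ⟨0, by norm_num⟩ (2*π) = xc γ φ 0 (2*π) from rfl,
      xc0_polar hsol he0 he1 φ (2 * π), hθ, Real.cos_add_pi]
    simp
    try ring
  · rw [show xc γ φ ⟨1, by norm_num⟩ (2*π) = xc γ φ 1 (2*π) from rfl,
      xc1_polar hsol he0 he1 φ (2 * π), hθ, Real.sin_add_pi]
    simp
    try ring

/-- Continuity of the total angle advance in the initial direction. -/
lemma continuous_Fc_im {β e : ℝ} {γ : ℝ → Matrix (Fin 2) (Fin 2) ℝ}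
    (hsol : IsFundSol β e γ) (he0 : 0 ≤ e) (he1 : e < 1) :
    Continuous (fun φ => (Fc β e γ φ (2 * π)).im) := by
  have h2π : (0:ℝ) ≤ 2 * π := by positivity
  have hxc : ∀ i : Fin 2, Continuous fun p : ℝ × ℝ => xc γ p.1 i p.2 := by
    intro i
    exact (((continuous_entry hsol i 0).comp continuous_snd).mul
        (Real.continuous_cos.comp continuous_fst)).add
      (((continuous_entry hsol i 1).comp continuous_snd).mul
        (Real.continuous_sin.comp continuous_fst))
  have hzc : Continuous fun p : ℝ × ℝ => zc γ p.1 p.2 :=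
    (Complex.continuous_ofReal.comp (hxc 0)).add
      ((Complex.continuous_ofReal.comp (hxc 1)).mul continuous_const)
  have hzdc : Continuous fun p : ℝ × ℝ => zdc β e γ p.1 p.2 :=
    (Complex.continuous_ofReal.comp
        ((((continuous_kf he0 he1).comp continuous_snd).neg).mul (hxc 1))).add
      ((Complex.continuous_ofReal.comp (hxc 0)).mul continuous_const)
  have hw : Continuous fun p : ℝ × ℝ => zdc β e γ p.1 p.2 / zc γ p.1 p.2 :=
    hzdc.div hzc (fun p => zc_ne_zero hsol p.1 p.2)
  have heq : (fun φ => Fc β e γ φ (2 * π)) =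
      fun φ => ∫ s in Set.Icc (0:ℝ) (2 * π), zdc β e γ φ s / zc γ φ s := by
    funext φ
    rw [Fc, intervalIntegral.integral_of_le h2π, ← MeasureTheory.integral_Icc_eq_integral_Ioc]
  have hcont : Continuous fun φ => Fc β e γ φ (2 * π) := by
    rw [heq]
    have hw' : Continuous (Function.uncurry fun (φ : ℝ) (s : ℝ) =>
        zdc β e γ φ s / zc γ φ s) := hw
    exact continuous_parametric_integral_of_continuous hw' isCompact_Icc
  exact Complex.continuous_im.comp hcont

end Stmt14

open Stmt14

/-- in Region II (between the two `-1`-degenerate values `β₁ < β₂`),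
the monodromy matrix has a real eigenvalue `μ < -1`, its trace is `< -2`,
and it is linearly unstable. -/
theorem stmt_14 (e : ℝ) (he : e ∈ Set.Ico (0 : ℝ) 1)
    (β₁ β₂ : ℝ) (hβ₁ : β₁ ∈ Set.Ioo (0 : ℝ) 1) (hβ₂ : β₂ ∈ Set.Ioo (0 : ℝ) 1)
    (hlt : β₁ < β₂)
    (γ : ℝ → ℝ → Matrix (Fin 2) (Fin 2) ℝ)
    (hγ : ∀ β ∈ Set.Icc (0 : ℝ) 1, IsFundSol β e (γ β))
    (hdeg : ∀ β ∈ Set.Icc (0 : ℝ) 1,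
      (Matrix.det (γ β (2 * π) + 1) = 0 ↔ β = β₁ ∨ β = β₂)) :
    ∀ β : ℝ, β₁ < β → β < β₂ →
      (∃ μ : ℝ, μ < -1 ∧ Matrix.det (γ β (2 * π) - μ • 1) = 0) ∧
      Matrix.trace (γ β (2 * π)) < -2 ∧
      ¬∃ C : ℝ, ∀ n : ℕ, ‖γ β (2 * π) ^ n‖ ≤ C := by
  obtain ⟨he0, he1⟩ := he
  intro β hb1 hb2
  have hβmem : β ∈ Set.Icc (0:ℝ) 1 :=
    ⟨le_of_lt (lt_trans hβ₁.1 hb1), le_of_lt (lt_trans hb2 hβ₂.2)⟩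
  have hβ₁mem : β₁ ∈ Set.Icc (0:ℝ) 1 := ⟨hβ₁.1.le, hβ₁.2.le⟩
  have hβ₂mem : β₂ ∈ Set.Icc (0:ℝ) 1 := ⟨hβ₂.1.le, hβ₂.2.le⟩
  have hsolβ := hγ β hβmem
  have hsol1 := hγ β₁ hβ₁mem
  have hsol2 := hγ β₂ hβ₂mem
  have hπ : (0:ℝ) < π := Real.pi_pos
  have h2π : (0:ℝ) ≤ 2 * π := by positivity
  -- degenerate directions at β₁ and β₂
  obtain ⟨φ₁, hφ₁, hθ₁⟩ := deg_theta hsol1 he0 he1 hβ₁.1.le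
    ((hdeg β₁ hβ₁mem).mpr (Or.inl rfl))
  obtain ⟨φ₂, hφ₂, hθ₂⟩ := deg_theta hsol2 he0 he1 hβ₂.1.le
    ((hdeg β₂ hβ₂mem).mpr (Or.inr rfl))
  -- the total angle advance for the middle β, as a function of the direction
  set Θ : ℝ → ℝ := fun φ => (Fc β e (γ β) φ (2 * π)).im with hΘdef
  have hΘcont : Continuous Θ := continuous_Fc_im hsolβ he0 he1
  have hθceq : ∀ φ, θc β e (γ β) φ (2 * π) = φ + Θ φ := fun φ => rfl
  have hΘ1 : Θ φ₁ ≤ π := by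
    have hcomp := theta_le (fun t => hasDerivAt_θc hsol1 he0 he1 φ₁ t)
      (fun t => hasDerivAt_θc hsolβ he0 he1 φ₁ t)
      (fun t => kf_anti hb1.le he0 he1 t)
      (fun t => abs_kf_sub_one hβ₁.1.le hβ₁.2.le he0 he1 t)
      (by rw [θc_zero, θc_zero]) (2 * π) h2π
    rw [hθ₁] at hcomp
    have h2 : θc β e (γ β) φ₁ (2 * π) = φ₁ + Θ φ₁ := hθceq φ₁
    linarith [hcomp, h2]
  have hΘ2 : π ≤ Θ φ₂ := by
    have hcomp := theta_le (fun t => hasDerivAt_θc hsolβ he0 he1 φ₂ t)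
      (fun t => hasDerivAt_θc hsol2 he0 he1 φ₂ t)
      (fun t => kf_anti hb2.le he0 he1 t)
      (fun t => abs_kf_sub_one hβmem.1 hβmem.2 he0 he1 t)
      (by rw [θc_zero, θc_zero]) (2 * π) h2π
    rw [hθ₂] at hcomp
    have h2 : θc β e (γ β) φ₂ (2 * π) = φ₂ + Θ φ₂ := hθceq φ₂
    linarith [hcomp, h2]
  -- intermediate value: a direction with angle advance exactly π
  obtain ⟨φ, _, hφπ⟩ := intermediate_value_uIcc hΘcont.continuousOn
    (Set.mem_uIcc.mpr (Or.inl ⟨hΘ1, hΘ2⟩))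
  have hθφ : θc β e (γ β) φ (2 * π) = φ + π := by rw [hθceq, hφπ]
  -- the negative eigenvalue
  set M := γ β (2 * π) with hM
  set μ : ℝ := -(Real.exp ((Fc β e (γ β) φ (2 * π)).re)) with hμ
  have heig : M.mulVec ![Real.cos φ, Real.sin φ] = μ • ![Real.cos φ, Real.sin φ] :=
    eigen_of_theta hsolβ he0 he1 φ hθφ
  have hμneg : μ < 0 := by rw [hμ]; simp [Real.exp_pos]
  have hμne0 : μ ≠ 0 := ne_of_lt hμneg
  have hdetM : M.det = 1 := det_gamma hsolβ _
  have hμne1 : μ ≠ -1 := by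
    intro h
    have hk : (M + 1).mulVec ![Real.cos φ, Real.sin φ] = 0 := by
      rw [Matrix.add_mulVec, Matrix.one_mulVec, heig, h]
      funext i
      fin_cases i <;> simp
    have hdet0 : (M + 1).det = 0 :=
      Matrix.exists_mulVec_eq_zero_iff.mp ⟨_, vec_ne_zero φ, hk⟩
    rcases (hdeg β hβmem).mp hdet0 with h' | h'
    · rw [h'] at hb1; exact lt_irrefl _ hb1
    · rw [h'] at hb2; exact lt_irrefl _ hb2
  have hchar : ∀ c : ℝ, (M - c • 1).det = c ^ 2 - (M 0 0 + M 1 1) * c + M.det := by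
    intro c
    rw [Matrix.det_fin_two, Matrix.det_fin_two]
    simp [Matrix.sub_apply, Matrix.smul_apply, Matrix.one_apply]
    ring
  have heigdet : (M - μ • 1).det = 0 := by
    apply Matrix.exists_mulVec_eq_zero_iff.mp
    refine ⟨_, vec_ne_zero φ, ?_⟩
    rw [Matrix.sub_mulVec, Matrix.smul_mulVec, Matrix.one_mulVec, heig]
    simp
  have hquad : μ ^ 2 - (M 0 0 + M 1 1) * μ + 1 = 0 := by
    have := hchar μ
    rw [hdetM] at this
    rw [← this, heigdet]
  have hsq : 0 < (μ + 1) ^ 2 := by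
    have hne : μ + 1 ≠ 0 := fun h => hμne1 (by linarith)
    exact lt_of_le_of_ne (sq_nonneg _) (Ne.symm (pow_ne_zero 2 hne))
  have htr : M 0 0 + M 1 1 < -2 := by nlinarith
  -- part 1
  have part1 : ∃ μ' : ℝ, μ' < -1 ∧ (M - μ' • 1).det = 0 := by
    by_cases hc : μ < -1
    · exact ⟨μ, hc, heigdet⟩
    · have hgt : -1 < μ := lt_of_le_of_ne (not_lt.mp hc) (Ne.symm hμne1)
      refine ⟨μ⁻¹, ?_, ?_⟩
      · have hmul : μ * μ⁻¹ = 1 := mul_inv_cancel₀ hμne0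
        nlinarith
      · rw [hchar, hdetM]
        have key : (μ⁻¹) ^ 2 - (M 0 0 + M 1 1) * μ⁻¹ + 1 =
            (μ ^ 2 - (M 0 0 + M 1 1) * μ + 1) * (μ⁻¹) ^ 2 := by
          field_simp
          ring
        rw [key, hquad, zero_mul]
  refine ⟨part1, ?_, ?_⟩
  · rw [Matrix.trace_fin_two]; exact htr
  -- part 3: instability
  rintro ⟨C, hC⟩
  obtain ⟨μb, hμb, hdetb⟩ := part1
  obtain ⟨w, hw, hwk⟩ := Matrix.exists_mulVec_eq_zero_iff.mpr hdetb
  have heigb : M.mulVec w = μb • w := by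
    rw [Matrix.sub_mulVec, Matrix.smul_mulVec, Matrix.one_mulVec] at hwk
    funext i
    have := congrFun hwk i
    simp only [Pi.sub_apply, Pi.zero_apply] at this
    simp only [Pi.smul_apply, smul_eq_mul] at this ⊢
    linarith
  have hpow : ∀ n : ℕ, (M ^ n).mulVec w = (μb ^ n) • w := by
    intro n
    induction n with
    | zero => simp [Matrix.one_mulVec]
    | succ n ih =>
      rw [pow_succ, ← Matrix.mulVec_mulVec, heigb, Matrix.mulVec_smul, ih,
        smul_smul, pow_succ]
      ring_nf
  obtain ⟨i, hi⟩ := Function.ne_iff.mp hw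
  have hwi : 0 < |w i| := abs_pos.mpr hi
  have hbound : ∀ n : ℕ, |μb| ^ n * |w i| ≤ C * (|w 0| + |w 1|) := by
    intro n
    have h1 : ((M ^ n).mulVec w) i = μb ^ n * w i := by
      rw [hpow]; simp
    have h2 : ((M ^ n).mulVec w) i = (M ^ n) i 0 * w 0 + (M ^ n) i 1 * w 1 := by
      simp [Matrix.mulVec, dotProduct, Fin.sum_univ_two]
    have h3 : |μb ^ n * w i| ≤ |(M ^ n) i 0| * |w 0| + |(M ^ n) i 1| * |w 1| := by
      rw [← h1, h2]
      exact (abs_add_le _ _).trans (by rw [abs_mul, abs_mul])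
    have h4 : |(M ^ n) i 0| ≤ ‖M ^ n‖ := by
      have := Matrix.norm_entry_le_entrywise_sup_norm (M ^ n) (i := i) (j := 0)
      rwa [Real.norm_eq_abs] at this
    have h5 : |(M ^ n) i 1| ≤ ‖M ^ n‖ := by
      have := Matrix.norm_entry_le_entrywise_sup_norm (M ^ n) (i := i) (j := 1)
      rwa [Real.norm_eq_abs] at this
    have h6 : ‖M ^ n‖ ≤ C := hC n
    have h7 : |μb ^ n * w i| = |μb| ^ n * |w i| := by
      rw [abs_mul, abs_pow]
    calc |μb| ^ n * |w i| = |μb ^ n * w i| := h7.symm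
      _ ≤ |(M ^ n) i 0| * |w 0| + |(M ^ n) i 1| * |w 1| := h3
      _ ≤ ‖M ^ n‖ * |w 0| + ‖M ^ n‖ * |w 1| :=
          add_le_add (mul_le_mul_of_nonneg_right h4 (abs_nonneg _))
            (mul_le_mul_of_nonneg_right h5 (abs_nonneg _))
      _ = ‖M ^ n‖ * (|w 0| + |w 1|) := by ring
      _ ≤ C * (|w 0| + |w 1|) :=
          mul_le_mul_of_nonneg_right h6 (by positivity)
  have habs : 1 < |μb| := by
    rw [abs_of_neg (by linarith : μb < 0)]
    linarith
  obtain ⟨n, hn⟩ := pow_unbounded_of_one_lt (C * (|w 0| + |w 1|) / |w i|) habs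
  have := hbound n
  rw [← le_div_iff₀ hwi] at this
  linarith
end
end

section
/- Fix e ∈ [0,1) and suppose β₁ < β₂ in (0,1) are such that, for β ∈ [0,1], det(γ_{β,e}(2π) + I₂) = 0 holds exactly when β ∈ {β₁, β₂}. Then for every β ∈ (0, β₁) ∪ (β₂, 1), the complex eigenvalues of γ_{β,e}(2π) are a pair of non-real complex conjugate numbers of modulus 1 (equivalently, |tr γ_{β,e}(2π)| < 2), and γ_{β,e}(2π) is linearly stable: sup_{n∈ℕ} ‖γ_{β,e}(2π)ⁿ‖ < ∞. -/
open Real Matrix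

attribute [local instance] Matrix.normedAddCommGroup

noncomputable section

/- ### Auxiliary development for the proof of Statement 15 -/

attribute [local instance] Matrix.normedSpace

namespace Stmt15

open Set intervalIntegral

def cf (β e t : ℝ) : ℝ := 1 - β / (1 + e * Real.cos t)

lemma den_pos {e : ℝ} (he0 : 0 ≤ e) (he1 : e < 1) (t : ℝ) :
    0 < 1 + e * Real.cos t := by
  nlinarith [Real.neg_one_le_cos t, Real.cos_le_one t]

lemma den_lb {e : ℝ} (he0 : 0 ≤ e) (t : ℝ) : 1 - e ≤ 1 + e * Real.cos t := by
  nlinarith [Real.neg_one_le_cos t]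

/-- Lipschitz-type bound for the coefficient. -/

def Kc (e : ℝ) : ℝ := 1 + 1 / (1 - e)

lemma one_le_Kc {e : ℝ} (he0 : 0 ≤ e) (he1 : e < 1) : 1 ≤ Kc e := by
  have : 0 < 1 - e := by linarith
  have : 0 < 1 / (1 - e) := by positivity
  simp only [Kc]; linarith

lemma cf_abs_le {e β : ℝ} (he0 : 0 ≤ e) (he1 : e < 1) (hβ : β ∈ Icc (0:ℝ) 1) (t : ℝ) :
    |cf β e t| ≤ Kc e := by
  have h1 : 0 < 1 - e := by linarith
  have h2 : 1 - e ≤ 1 + e * Real.cos t := den_lb he0 t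
  have h3 : 0 < 1 + e * Real.cos t := lt_of_lt_of_le h1 h2
  have hb0 : 0 ≤ β / (1 + e * Real.cos t) := div_nonneg hβ.1 h3.le
  have hb1 : β / (1 + e * Real.cos t) ≤ 1 / (1 - e) := by
    rw [div_le_div_iff₀ h3 h1]
    nlinarith [hβ.2]
  rw [abs_le]; constructor <;> simp only [cf, Kc] <;> nlinarith

def vf (β e t : ℝ) (x : Fin 2 → ℝ) : Fin 2 → ℝ := ![-(cf β e t) * x 1, x 0]

lemma JB_entries (β e t : ℝ) : Jmat * Bmat β e t = !![0, -(cf β e t); 1, 0] := by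
  simp [Jmat, Bmat, cf]

lemma deriv_row0 {β e : ℝ} {γ : ℝ → Matrix (Fin 2) (Fin 2) ℝ} (h : IsFundSol β e γ)
    (t : ℝ) (j : Fin 2) :
    HasDerivAt (fun s => γ s 0 j) (-(cf β e t) * γ t 1 j) t := by
  have := h.2 t 0 j
  rwa [JB_entries, show (!![0, -(cf β e t); 1, 0] * γ t) 0 j = -(cf β e t) * γ t 1 j by
    simp [Matrix.mul_apply, Fin.sum_univ_two]] at this

lemma deriv_row1 {β e : ℝ} {γ : ℝ → Matrix (Fin 2) (Fin 2) ℝ} (h : IsFundSol β e γ)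
    (t : ℝ) (j : Fin 2) :
    HasDerivAt (fun s => γ s 1 j) (γ t 0 j) t := by
  have := h.2 t 1 j
  rwa [JB_entries, show (!![0, -(cf β e t); 1, 0] * γ t) 1 j = γ t 0 j by
    simp [Matrix.mul_apply, Fin.sum_univ_two]] at this

lemma norm_vf_sub (β e t : ℝ) (x y : Fin 2 → ℝ) (K : ℝ) (hK1 : 1 ≤ K)
    (hKc : |cf β e t| ≤ K) : dist (vf β e t x) (vf β e t y) ≤ K * dist x y := by
  have h0 : (0:ℝ) ≤ K * dist x y := by positivity
  rw [dist_pi_le_iff h0]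
  intro i
  fin_cases i
  · show dist (-(cf β e t) * x 1) (-(cf β e t) * y 1) ≤ _
    rw [Real.dist_eq, ← mul_sub, abs_mul, abs_neg]
    calc |cf β e t| * |x 1 - y 1| ≤ K * |x 1 - y 1| :=
          mul_le_mul_of_nonneg_right hKc (abs_nonneg _)
    _ ≤ K * dist x y := by
          apply mul_le_mul_of_nonneg_left _ (by linarith)
          rw [← Real.dist_eq]; exact dist_le_pi_dist x y 1
  · show dist (x 0) (y 0) ≤ _
    calc dist (x 0) (y 0) ≤ dist x y := dist_le_pi_dist x y 0
    _ ≤ K * dist x y := le_mul_of_one_le_left dist_nonneg hK1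

lemma vf_lip {β e : ℝ} (he0 : 0 ≤ e) (he1 : e < 1) (hβ : β ∈ Icc (0:ℝ) 1) (t : ℝ) :
    LipschitzWith (Real.toNNReal (Kc e)) (vf β e t) := by
  apply LipschitzWith.of_dist_le_mul
  intro x y
  rw [Real.coe_toNNReal _ (by linarith [one_le_Kc he0 he1])]
  exact norm_vf_sub β e t x y _ (one_le_Kc he0 he1) (cf_abs_le he0 he1 hβ t)

lemma mulVec_hasDeriv {β e : ℝ} {γ : ℝ → Matrix (Fin 2) (Fin 2) ℝ} (h : IsFundSol β e γ)
    (v : Fin 2 → ℝ) (t : ℝ) :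
    HasDerivAt (fun s => γ s *ᵥ v) (vf β e t (γ t *ᵥ v)) t := by
  rw [hasDerivAt_pi]
  intro i
  have key : ∀ i, (fun s => (γ s *ᵥ v) i) = fun s => γ s i 0 * v 0 + γ s i 1 * v 1 := by
    intro i; funext s; simp [Matrix.mulVec, dotProduct, Fin.sum_univ_two]
  fin_cases i
  · show HasDerivAt (fun s => (γ s *ᵥ v) 0) (vf β e t (γ t *ᵥ v) 0) t
    simp only [key]
    have := (((deriv_row0 h t 0).mul_const (v 0)).add ((deriv_row0 h t 1).mul_const (v 1)))
    refine this.congr_deriv (Eq.symm ?_)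
    simp [vf, Matrix.mulVec, dotProduct, Fin.sum_univ_two]; ring
  · show HasDerivAt (fun s => (γ s *ᵥ v) 1) (vf β e t (γ t *ᵥ v) 1) t
    simp only [key]
    have := (((deriv_row1 h t 0).mul_const (v 0)).add ((deriv_row1 h t 1).mul_const (v 1)))
    refine this.congr_deriv (Eq.symm ?_)
    simp [vf, Matrix.mulVec, dotProduct, Fin.sum_univ_two]

/-- global uniqueness for the system -/

lemma ode_unique {β e : ℝ} (he0 : 0 ≤ e) (he1 : e < 1) (hβ : β ∈ Icc (0:ℝ) 1)
    {f g : ℝ → Fin 2 → ℝ}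
    (hf : ∀ t, HasDerivAt f (vf β e t (f t)) t)
    (hg : ∀ t, HasDerivAt g (vf β e t (g t)) t)
    (h0 : f 0 = g 0) (t : ℝ) : f t = g t := by
  have ht : t ∈ Icc (-(|t|+1)) (|t|+1) := by
    constructor <;> [nlinarith [abs_nonneg t, neg_abs_le t]; nlinarith [le_abs_self t]]
  refine ODE_solution_unique_of_mem_Icc (v := vf β e) (s := fun _ => univ)
    (fun t _ => (vf_lip he0 he1 hβ t).lipschitzOnWith)
    (show (0:ℝ) ∈ Ioo (-(|t|+1)) (|t|+1) by
      constructor <;> nlinarith [abs_nonneg t])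
    (fun s _ => (hf s).continuousAt.continuousWithinAt)
    (fun s _ => hf s) (fun _ _ => trivial)
    (fun s _ => (hg s).continuousAt.continuousWithinAt)
    (fun s _ => hg s) (fun _ _ => trivial) h0 ht

lemma det_one {β e : ℝ} {γ : ℝ → Matrix (Fin 2) (Fin 2) ℝ} (h : IsFundSol β e γ) (t : ℝ) :
    (γ t).det = 1 := by
  have hd : ∀ s : ℝ, HasDerivAt (fun u => (γ u).det) 0 s := by
    intro s
    have : ∀ u, (γ u).det = γ u 0 0 * γ u 1 1 - γ u 0 1 * γ u 1 0 := fun u => by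
      rw [Matrix.det_fin_two]
    simp only [this]
    have h1 := ((deriv_row0 h s 0).mul (deriv_row1 h s 1)).sub
      ((deriv_row0 h s 1).mul (deriv_row1 h s 0))
    refine h1.congr_deriv (Eq.symm ?_)
    ring
  have hconst : (γ t).det = (γ 0).det :=
    is_const_of_deriv_eq_zero (fun s => (hd s).differentiableAt) (fun s => (hd s).deriv) t 0
  rw [hconst, h.1, Matrix.det_one]

/-- invertibility consequence -/

lemma mulVec_eq_zero {A : Matrix (Fin 2) (Fin 2) ℝ} (hA : A.det = 1) {v : Fin 2 → ℝ}
    (hv : A *ᵥ v = 0) : v = 0 := by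
  have hu : IsUnit A.det := by rw [hA]; exact isUnit_one
  have := Matrix.nonsing_inv_mul A (by rw [hA]; exact isUnit_one)
  calc v = (A⁻¹ * A) *ᵥ v := by rw [this, Matrix.one_mulVec]
  _ = A⁻¹ *ᵥ (A *ᵥ v) := by rw [Matrix.mulVec_mulVec]
  _ = 0 := by rw [hv, Matrix.mulVec_zero]

/-- existence of kernel vector when det = 0 -/

lemma exists_ker {A : Matrix (Fin 2) (Fin 2) ℝ} (hA : A.det = 0) :
    ∃ v : Fin 2 → ℝ, v ≠ 0 ∧ A *ᵥ v = 0 := by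
  have := (Matrix.exists_mulVec_eq_zero_iff (M := A)).2 hA
  obtain ⟨v, hv0, hv⟩ := this
  exact ⟨v, hv0, hv⟩

lemma core_gap {e β : ℝ} (he0 : 0 ≤ e) (he1 : e < 1) (hβ0 : 0 < β)
    (x p : ℝ → ℝ)
    (hx : ∀ t, HasDerivAt x (p t) t)
    (hp : ∀ t, HasDerivAt p (-(cf β e t) * x t) t)
    (a b : ℝ) (hab : a < b) (hba : b - a ≤ π)
    (hxa : x a = 0) (hxb : x b = 0)
    (hpos : ∀ t ∈ Ioo a b, 0 < x t) : False := by
  have hxc : Continuous x := continuous_iff_continuousAt.2 fun t => (hx t).continuousAt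
  have hpc : Continuous p := continuous_iff_continuousAt.2 fun t => (hp t).continuousAt
  -- the Wronskian-type function
  set W : ℝ → ℝ := fun t => p t * Real.sin (t - a) - x t * Real.cos (t - a) with hW
  set W' : ℝ → ℝ := fun t => (β / (1 + e * Real.cos t)) * x t * Real.sin (t - a) with hW'
  have hWd : ∀ t, HasDerivAt W (W' t) t := by
    intro t
    have hsin : HasDerivAt (fun t => Real.sin (t - a)) (Real.cos (t - a)) t := by
      simpa [Function.comp_def] using (Real.hasDerivAt_sin (t - a)).comp t ((hasDerivAt_id t).sub_const a)
    have hcos : HasDerivAt (fun t => Real.cos (t - a)) (-Real.sin (t - a)) t := by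
      simpa [Function.comp_def] using (Real.hasDerivAt_cos (t - a)).comp t ((hasDerivAt_id t).sub_const a)
    have h1 := ((hp t).mul hsin).sub ((hx t).mul hcos)
    refine h1.congr_deriv (Eq.symm ?_)
    have hden := (den_pos he0 he1 t).ne'
    simp only [hW', cf]
    field_simp
    ring
  have hW'c : Continuous W' := by
    apply Continuous.mul
    apply Continuous.mul
    · exact (continuous_const.div (by continuity) (fun t => (den_pos he0 he1 t).ne'))
    · exact hxc
    · exact (Real.continuous_sin.comp (by continuity))
  -- integral identity
  have hint : ∫ t in a..b, W' t = W b - W a :=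
    integral_eq_sub_of_hasDerivAt (fun t _ => hWd t) (hW'c.intervalIntegrable a b)
  have hWa : W a = 0 := by simp [hW, hxa]
  have hWb : W b = p b * Real.sin (b - a) := by simp [hW, hxb]
  -- positivity of the integral
  have hIpos : 0 < ∫ t in a..b, W' t := by
    apply intervalIntegral_pos_of_pos_on (hW'c.intervalIntegrable a b) _ hab
    intro t ht
    have hsin : 0 < Real.sin (t - a) := by
      apply Real.sin_pos_of_pos_of_lt_pi (by linarith [ht.1])
      linarith [ht.2]
    have hden := den_pos he0 he1 t
    have := hpos t ht
    positivity
  rw [hint, hWa, hWb, sub_zero] at hIpos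
  -- sin (b-a) ≥ 0
  have hsin_nonneg : 0 ≤ Real.sin (b - a) :=
    Real.sin_nonneg_of_nonneg_of_le_pi (by linarith) hba
  have hpb_pos : 0 < p b := by
    rcases lt_trichotomy (p b) 0 with h | h | h
    · nlinarith
    · rw [h] at hIpos; simp at hIpos
    · exact h
  -- but the left slope at b is ≤ 0
  have hslope : p b ≤ 0 := by
    have htend : Filter.Tendsto (slope x b) (nhdsWithin b (Ioo a b)) (nhds (p b)) := by
      apply (hasDerivAt_iff_tendsto_slope.1 (hx b)).mono_left
      apply nhdsWithin_mono
      intro t ht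
      exact fun h => absurd h (ne_of_lt ht.2)
    have hne : (nhdsWithin b (Ioo a b)).NeBot := by
      apply mem_closure_iff_nhdsWithin_neBot.1
      rw [closure_Ioo hab.ne]
      exact ⟨hab.le, le_rfl⟩
    apply le_of_tendsto htend
    apply eventually_nhdsWithin_of_forall
    intro t ht
    have h1 : x t > 0 := hpos t ht
    have h2 : t - b < 0 := by linarith [ht.2]
    rw [slope_def_field, hxb, sub_zero]
    exact le_of_lt (div_neg_of_pos_of_neg h1 h2)
  linarith

lemma const_sign {x : ℝ → ℝ} (hxc : Continuous x) {a b : ℝ}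
    (hne : ∀ t ∈ Ioo a b, x t ≠ 0) :
    (∀ t ∈ Ioo a b, 0 < x t) ∨ (∀ t ∈ Ioo a b, x t < 0) := by
  by_contra hcon
  push_neg at hcon
  obtain ⟨⟨t1, ht1, ht1'⟩, ⟨t2, ht2, ht2'⟩⟩ := hcon
  have h1 : x t1 < 0 := lt_of_le_of_ne ht1' (hne t1 ht1)
  have h2 : 0 < x t2 := lt_of_le_of_ne ht2' (Ne.symm (hne t2 ht2))
  rcases le_total t1 t2 with h | h
  · obtain ⟨z, hz, hz0⟩ := intermediate_value_Ioo h hxc.continuousOn (by constructor <;> assumption : (0:ℝ) ∈ Ioo (x t1) (x t2))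
    exact hne z ⟨lt_trans ht1.1 hz.1, lt_trans hz.2 ht2.2⟩ hz0
  · obtain ⟨z, hz, hz0⟩ := intermediate_value_Ioo' h hxc.continuousOn (by constructor <;> assumption : (0:ℝ) ∈ Ioo (x t1) (x t2))
    exact hne z ⟨lt_trans ht2.1 hz.1, lt_trans hz.2 ht1.2⟩ hz0

/-- gap between consecutive zeros exceeds π -/

lemma gap_gt_pi {e β : ℝ} (he0 : 0 ≤ e) (he1 : e < 1) (hβ0 : 0 < β)
    (x p : ℝ → ℝ)
    (hx : ∀ t, HasDerivAt x (p t) t)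
    (hp : ∀ t, HasDerivAt p (-(cf β e t) * x t) t)
    (a b : ℝ) (hab : a < b)
    (hxa : x a = 0) (hxb : x b = 0)
    (hne : ∀ t ∈ Ioo a b, x t ≠ 0) : π < b - a := by
  by_contra hle
  push_neg at hle
  have hxc : Continuous x := continuous_iff_continuousAt.2 fun t => (hx t).continuousAt
  rcases const_sign hxc hne with hpos | hneg
  · exact core_gap he0 he1 hβ0 x p hx hp a b hab hle hxa hxb hpos
  · apply core_gap he0 he1 hβ0 (fun t => -x t) (fun t => -p t)
      (fun t => (hx t).neg) (fun t => by simpa [neg_mul, mul_neg, Pi.neg_def] using (hp t).neg)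
      a b hab hle (by simp [hxa]) (by simp [hxb])
    intro t ht
    simpa using hneg t ht

lemma isolated_zero {x p : ℝ → ℝ} (hx : ∀ t, HasDerivAt x (p t) t)
    {t₀ : ℝ} (hx0 : x t₀ = 0) (hp0 : p t₀ ≠ 0) :
    ∃ δ, 0 < δ ∧ δ ≤ π ∧ ∀ t, t ≠ t₀ → |t - t₀| < δ → x t ≠ 0 := by
  by_contra hcon
  push_neg at hcon
  have hfreq : ∃ᶠ t in nhdsWithin t₀ {t₀}ᶜ, x t = 0 := by
    rw [Filter.frequently_iff]
    intro U hU
    rw [Metric.mem_nhdsWithin_iff] at hU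
    obtain ⟨ε, hε, hsub⟩ := hU
    obtain ⟨t, ht1, ht2, ht3⟩ := hcon (min ε π) (lt_min hε Real.pi_pos) (min_le_right _ _)
    refine ⟨t, hsub ⟨?_, ht1⟩, ht3⟩
    rw [Metric.mem_ball, Real.dist_eq]
    exact lt_of_lt_of_le ht2 (min_le_left _ _)
  have htend : Filter.Tendsto (slope x t₀) (nhdsWithin t₀ {t₀}ᶜ) (nhds (p t₀)) :=
    hasDerivAt_iff_tendsto_slope.1 (hx t₀)
  have : p t₀ = 0 := by
    apply tendsto_nhds_unique_of_frequently_eq htend tendsto_const_nhds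
    apply hfreq.mono
    intro t ht
    rw [slope_def_field, ht, hx0]
    simp
  exact hp0 this

lemma exists_zero_of_integral_zero {x : ℝ → ℝ} (hxc : Continuous x) {a b : ℝ} (hab : a < b)
    (hint : ∫ t in a..b, x t = 0) : ∃ t ∈ Ioo a b, x t = 0 := by
  by_contra hcon
  push_neg at hcon
  rcases const_sign hxc hcon with hpos | hneg
  · have := intervalIntegral_pos_of_pos_on (hxc.intervalIntegrable a b) hpos hab
    rw [hint] at this; exact lt_irrefl 0 this
  · have := intervalIntegral_pos_of_pos_on ((hxc.neg).intervalIntegrable a b)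
      (fun t ht => by simpa using (hneg t ht)) hab
    simp only [Pi.neg_apply] at this
    rw [intervalIntegral.integral_neg, hint, neg_zero] at this
    exact lt_irrefl 0 this

theorem trace_ne_two {β e : ℝ} (he0 : 0 ≤ e) (he1 : e < 1) (hβ : β ∈ Ioo (0:ℝ) 1)
    {γ : ℝ → Matrix (Fin 2) (Fin 2) ℝ} (h : IsFundSol β e γ) :
    Matrix.trace (γ (2 * π)) ≠ 2 := by
  intro htr
  have hβIcc : β ∈ Icc (0:ℝ) 1 := ⟨hβ.1.le, hβ.2.le⟩
  set M := γ (2 * π) with hM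
  have hdetM : M.det = 1 := det_one h _
  -- the matrix M - 1 is singular
  have hdetA : (M - 1).det = 0 := by
    rw [Matrix.det_fin_two] at hdetM ⊢
    rw [Matrix.trace_fin_two] at htr
    simp only [Matrix.sub_apply, Matrix.one_apply]
    norm_num
    nlinarith [hdetM, htr]
  obtain ⟨v, hv0, hker⟩ := exists_ker hdetA
  have hMv : M *ᵥ v = v := by
    have := hker
    rw [Matrix.sub_mulVec, Matrix.one_mulVec, sub_eq_zero] at this
    exact this
  -- the vector solution
  set z : ℝ → Fin 2 → ℝ := fun t => γ t *ᵥ v with hzdef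
  have hz : ∀ t, HasDerivAt z (vf β e t (z t)) t := fun t => mulVec_hasDeriv h v t
  set x : ℝ → ℝ := fun t => z t 1 with hxdef
  set p : ℝ → ℝ := fun t => z t 0 with hpdef
  have hx : ∀ t, HasDerivAt x (p t) t := by
    intro t
    have := hasDerivAt_pi.1 (hz t) 1
    simpa [vf] using this
  have hp : ∀ t, HasDerivAt p (-(cf β e t) * x t) t := by
    intro t
    have := hasDerivAt_pi.1 (hz t) 0
    simpa [vf] using this
  have hxc : Continuous x := continuous_iff_continuousAt.2 fun t => (hx t).continuousAt
  -- periodicity of z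
  have hz0 : z 0 = v := by rw [hzdef]; simp [h.1]
  have hz2π : z (2 * π) = v := hMv
  have hperz : ∀ t, z (t + 2 * π) = z t := by
    intro t
    apply ode_unique he0 he1 hβIcc (f := fun t => z (t + 2 * π)) (g := z) _ hz _ t
    · intro s
      have hcomp := (hz (s + 2 * π)).scomp s ((hasDerivAt_id s).add_const (2 * π))
      simp only [one_smul] at hcomp
      have heq : vf β e (s + 2 * π) = vf β e s := by
        funext y; simp [vf, cf, Real.cos_add_two_pi]
      rw [heq] at hcomp
      exact hcomp
    · show z (0 + 2 * π) = z 0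
      rw [zero_add, hz2π, hz0]
  have hperx : Function.Periodic x (2 * π) := fun t => congrArg (fun w => w 1) (hperz t)
  -- nontriviality : simple zeros
  have hsimple : ∀ t, x t = 0 → p t ≠ 0 := by
    intro t hxt hpt
    apply hv0
    have hz0' : z t = 0 := by
      funext i; fin_cases i
      · exact hpt
      · exact hxt
    exact mulVec_eq_zero (det_one h t) hz0'
  -- the integral of x over a period vanishes
  have hintx : ∫ t in (0:ℝ)..(2 * π), x t = 0 := by
    set G : ℝ → ℝ := fun t => p t * (1 + e * Real.cos t) - x t * (-(e * Real.sin t)) with hGdef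
    have hG : ∀ t, HasDerivAt G ((β - 1) * x t) t := by
      intro t
      have hy : HasDerivAt (fun t : ℝ => 1 + e * Real.cos t) (e * -Real.sin t) t :=
        (((Real.hasDerivAt_cos t).const_mul e).const_add 1)
      have hy' : HasDerivAt (fun t : ℝ => -(e * Real.sin t)) (-(e * Real.cos t)) t :=
        (((Real.hasDerivAt_sin t).const_mul e)).neg
      have hraw := ((hp t).mul hy).sub ((hx t).mul hy')
      refine hraw.congr_deriv (Eq.symm ?_)
      have hden := (den_pos he0 he1 t).ne'
      simp only [cf]
      field_simp
      ring
    have h1 : ∫ t in (0:ℝ)..(2 * π), (β - 1) * x t = G (2 * π) - G 0 :=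
      integral_eq_sub_of_hasDerivAt (fun t _ => hG t)
        ((continuous_const.mul hxc).intervalIntegrable _ _)
    have h2 : G (2 * π) = G 0 := by
      have hp2π : p (2 * π) = p 0 := by
        have := hperz 0; rw [zero_add] at this
        exact congrArg (fun w => w 0) this
      have hx2π : x (2 * π) = x 0 := by
        have := hperz 0; rw [zero_add] at this
        exact congrArg (fun w => w 1) this
      simp [hGdef, hp2π, hx2π, Real.cos_two_pi, Real.sin_two_pi]
    rw [h2, sub_self] at h1
    rw [intervalIntegral.integral_const_mul] at h1
    have hβ1 : β - 1 ≠ 0 := by have := hβ.2; intro hc; linarith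
    exact (mul_eq_zero.1 h1).resolve_left hβ1
  have h2π : (0:ℝ) < 2 * π := by positivity
  -- a zero of x
  obtain ⟨t₀, ht₀, hxt₀⟩ := exists_zero_of_integral_zero hxc h2π hintx
  -- a second zero in the open period window
  have hshift : ∫ t in t₀..(t₀ + 2 * π), x t = 0 := by
    have := hperx.intervalIntegral_add_eq t₀ 0
    rw [zero_add] at this
    rw [this]; exact hintx
  obtain ⟨t₁, ht₁, hxt₁⟩ := exists_zero_of_integral_zero hxc (by linarith) hshift
  -- isolation at t₀ and t₀ + 2π
  obtain ⟨δ, hδ0, hδπ, hδ⟩ := isolated_zero hx hxt₀ (hsimple t₀ hxt₀)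
  have hxt₀' : x (t₀ + 2 * π) = 0 := by rw [hperx t₀]; exact hxt₀
  obtain ⟨δ', hδ'0, hδ'π, hδ'⟩ := isolated_zero hx hxt₀' (hsimple _ hxt₀')
  have hπ := Real.pi_pos
  -- first zero after t₀
  set C : Set ℝ := {t | x t = 0} ∩ Icc (t₀ + δ) (t₀ + 2 * π) with hCdef
  have hCc : IsCompact C := IsCompact.inter_left isCompact_Icc (isClosed_singleton.preimage hxc)
  have hCne : C.Nonempty := ⟨t₀ + 2 * π, hxt₀', ⟨by linarith, le_refl _⟩⟩
  set s := sInf C with hsdef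
  have hsC : s ∈ C := hCc.sInf_mem hCne
  have hxs : x s = 0 := hsC.1
  have hs1 : t₀ + δ ≤ s := hsC.2.1
  have hs2 : s ≤ t₀ + 2 * π := hsC.2.2
  have hnz1 : ∀ t ∈ Ioo t₀ s, x t ≠ 0 := by
    intro t ht hxt
    rcases lt_or_ge t (t₀ + δ) with hc | hc
    · exact hδ t (ne_of_gt ht.1) (by rw [abs_of_pos (by linarith [ht.1])]; linarith) hxt
    · have : t ∈ C := ⟨hxt, hc, by linarith [ht.2, hs2]⟩
      have := csInf_le hCc.bddBelow this
      linarith [ht.2]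
  have hgap1 : π < s - t₀ := gap_gt_pi he0 he1 hβ.1 x p hx hp t₀ s (by linarith) hxt₀ hxs hnz1
  -- last zero before t₀ + 2π
  set C' : Set ℝ := {t | x t = 0} ∩ Icc t₀ (t₀ + 2 * π - δ') with hC'def
  have hC'c : IsCompact C' := IsCompact.inter_left isCompact_Icc (isClosed_singleton.preimage hxc)
  have hC'ne : C'.Nonempty := ⟨t₀, hxt₀, ⟨le_refl _, by linarith⟩⟩
  set s' := sSup C' with hs'def
  have hs'C : s' ∈ C' := hC'c.sSup_mem hC'ne
  have hxs' : x s' = 0 := hs'C.1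
  have hs'1 : t₀ ≤ s' := hs'C.2.1
  have hs'2 : s' ≤ t₀ + 2 * π - δ' := hs'C.2.2
  have hnz2 : ∀ t ∈ Ioo s' (t₀ + 2 * π), x t ≠ 0 := by
    intro t ht hxt
    rcases lt_or_ge (t₀ + 2 * π - δ') t with hc | hc
    · exact hδ' t (ne_of_lt ht.2) (by rw [abs_of_neg (by linarith [ht.2])]; linarith) hxt
    · have : t ∈ C' := ⟨hxt, by linarith [ht.1, hs'1], hc⟩
      have := le_csSup hC'c.bddAbove this
      linarith [ht.1]
  have hgap2 : π < (t₀ + 2 * π) - s' :=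
    gap_gt_pi he0 he1 hβ.1 x p hx hp s' (t₀ + 2 * π) (by linarith) hxs' hxt₀' hnz2
  -- t₁ lies between the isolation zones
  have ht₁l : t₀ + δ ≤ t₁ := by
    by_contra hc
    push_neg at hc
    exact hδ t₁ (ne_of_gt ht₁.1) (by rw [abs_of_pos (by linarith [ht₁.1])]; linarith) hxt₁
  have ht₁r : t₁ ≤ t₀ + 2 * π - δ' := by
    by_contra hc
    push_neg at hc
    exact hδ' t₁ (ne_of_lt ht₁.2) (by rw [abs_of_neg (by linarith [ht₁.2])]; linarith) hxt₁
  have hst₁ : s ≤ t₁ := csInf_le hCc.bddBelow ⟨hxt₁, ht₁l, ht₁.2.le⟩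
  have hs't₁ : t₁ ≤ s' := le_csSup hC'c.bddAbove ⟨hxt₁, ht₁.1.le, ht₁r⟩
  linarith

theorem trace_at_zero {e : ℝ} (he0 : 0 ≤ e) (he1 : e < 1)
    {γ : ℝ → Matrix (Fin 2) (Fin 2) ℝ} (h : IsFundSol 0 e γ) :
    Matrix.trace (γ (2 * π)) = 2 := by
  have hvf : ∀ t (y : Fin 2 → ℝ), vf 0 e t y = ![-(y 1), y 0] := by
    intro t y; funext i; fin_cases i <;> simp [vf, cf]
  have key : ∀ (v : Fin 2 → ℝ) (g : ℝ → Fin 2 → ℝ),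
      (∀ t, HasDerivAt g (![-(g t 1), g t 0]) t) → g 0 = v →
      ∀ t, γ t *ᵥ v = g t := by
    intro v g hg hg0 t
    apply ode_unique he0 he1 (⟨by norm_num, by norm_num⟩ : (0:ℝ) ∈ Icc (0:ℝ) 1)
      (f := fun t => γ t *ᵥ v) (g := g)
      (fun t => by show HasDerivAt (fun t => γ t *ᵥ v) (vf 0 e t (γ t *ᵥ v)) t; exact mulVec_hasDeriv h v t)
      (fun t => by rw [hvf]; exact hg t)
      (by show γ 0 *ᵥ v = g 0; rw [h.1, Matrix.one_mulVec, hg0])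
  have h00 : γ (2 * π) *ᵥ ![1, 0] = ![Real.cos (2 * π), Real.sin (2 * π)] := by
    apply key ![1, 0] (fun t => ![Real.cos t, Real.sin t])
    · intro t
      rw [hasDerivAt_pi]
      intro i; fin_cases i
      · simpa using Real.hasDerivAt_cos t
      · simpa using Real.hasDerivAt_sin t
    · simp
  have h11 : γ (2 * π) *ᵥ ![0, 1] = ![-Real.sin (2 * π), Real.cos (2 * π)] := by
    apply key ![0, 1] (fun t => ![-Real.sin t, Real.cos t])
    · intro t
      rw [hasDerivAt_pi]
      intro i; fin_cases i
      · simpa [Pi.neg_def] using (Real.hasDerivAt_sin t).neg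
      · simpa using Real.hasDerivAt_cos t
    · simp
  have e00 : γ (2 * π) 0 0 = 1 := by
    have := congrFun h00 0
    simpa [Matrix.mulVec, dotProduct, Fin.sum_univ_two, Real.cos_two_pi] using this
  have e11 : γ (2 * π) 1 1 = 1 := by
    have := congrFun h11 1
    simpa [Matrix.mulVec, dotProduct, Fin.sum_univ_two, Real.cos_two_pi] using this
  rw [Matrix.trace_fin_two, e00, e11]; norm_num

/-- at β = 1 the monodromy has trace 2 -/

theorem trace_at_one {e : ℝ} (he0 : 0 ≤ e) (he1 : e < 1)
    {γ : ℝ → Matrix (Fin 2) (Fin 2) ℝ} (h : IsFundSol 1 e γ) :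
    Matrix.trace (γ (2 * π)) = 2 := by
  have hY : γ (2 * π) *ᵥ ![0, 1 + e] = ![-(e * Real.sin (2 * π)), 1 + e * Real.cos (2 * π)] := by
    apply ode_unique he0 he1 (⟨by norm_num, by norm_num⟩ : (1:ℝ) ∈ Icc (0:ℝ) 1)
      (f := fun t => γ t *ᵥ ![0, 1 + e])
      (g := fun t => ![-(e * Real.sin t), 1 + e * Real.cos t])
      (fun t => mulVec_hasDeriv h _ t)
      (fun t => by
        rw [hasDerivAt_pi]
        intro i; fin_cases i
        · show HasDerivAt (fun t => -(e * Real.sin t)) _ t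
          have hd := ((Real.hasDerivAt_sin t).const_mul e).neg
          refine hd.congr_deriv (Eq.symm ?_)
          have hden := (den_pos he0 he1 t).ne'
          show -(cf 1 e t) * (1 + e * Real.cos t) = -(e * Real.cos t)
          simp only [cf]
          field_simp
          ring
        · show HasDerivAt (fun t => 1 + e * Real.cos t) _ t
          have hd := ((Real.hasDerivAt_cos t).const_mul e).const_add 1
          refine hd.congr_deriv (Eq.symm ?_)
          show (![-(e * Real.sin t), 1 + e * Real.cos t] : Fin 2 → ℝ) 0 = e * -Real.sin t
          simp
          try ring)
      (by show γ 0 *ᵥ ![0, 1 + e] = _; rw [h.1, Matrix.one_mulVec]; simp)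
  have h01 : γ (2 * π) 0 1 * (1 + e) = 0 := by
    have := congrFun hY 0
    simpa [Matrix.mulVec, dotProduct, Fin.sum_univ_two, Real.sin_two_pi] using this
  have h11 : γ (2 * π) 1 1 * (1 + e) = 1 + e := by
    have := congrFun hY 1
    simpa [Matrix.mulVec, dotProduct, Fin.sum_univ_two, Real.cos_two_pi] using this
  have hep : (1 : ℝ) + e ≠ 0 := by linarith
  have e01 : γ (2 * π) 0 1 = 0 := by
    rcases mul_eq_zero.1 h01 with h' | h'
    · exact h'
    · exact absurd h' hep
  have e11 : γ (2 * π) 1 1 = 1 := by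
    field_simp at h11
    tauto
  have hdet := det_one h (2 * π)
  rw [Matrix.det_fin_two, e01, e11] at hdet
  rw [Matrix.trace_fin_two, e11]
  simp at hdet
  rw [hdet]; norm_num

lemma norm_vf_le {e β : ℝ} (he0 : 0 ≤ e) (he1 : e < 1) (hβ : β ∈ Icc (0:ℝ) 1)
    (t : ℝ) (y : Fin 2 → ℝ) : ‖vf β e t y‖ ≤ Kc e * ‖y‖ := by
  have hKc := one_le_Kc he0 he1
  have h0 : (0:ℝ) ≤ Kc e * ‖y‖ := by positivity
  rw [pi_norm_le_iff_of_nonneg h0]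
  intro i
  fin_cases i
  · show ‖-(cf β e t) * y 1‖ ≤ _
    rw [norm_mul, norm_neg]
    calc ‖cf β e t‖ * ‖y 1‖ ≤ Kc e * ‖y 1‖ :=
          mul_le_mul_of_nonneg_right (cf_abs_le he0 he1 hβ t) (norm_nonneg _)
    _ ≤ Kc e * ‖y‖ := by
          apply mul_le_mul_of_nonneg_left (norm_le_pi_norm y 1) (by linarith)
  · show ‖y 0‖ ≤ _
    calc ‖y 0‖ ≤ ‖y‖ := norm_le_pi_norm y 0
    _ ≤ Kc e * ‖y‖ := le_mul_of_one_le_left (norm_nonneg _) hKc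

lemma sol_norm_bound {e β : ℝ} (he0 : 0 ≤ e) (he1 : e < 1) (hβ : β ∈ Icc (0:ℝ) 1)
    {γ : ℝ → Matrix (Fin 2) (Fin 2) ℝ} (h : IsFundSol β e γ) (v : Fin 2 → ℝ)
    {t : ℝ} (ht : t ∈ Icc (0:ℝ) (2 * π)) :
    ‖γ t *ᵥ v‖ ≤ ‖v‖ * Real.exp (Kc e * (2 * π)) := by
  have key := norm_le_gronwallBound_of_norm_deriv_right_le
    (f := fun t => γ t *ᵥ v) (f' := fun t => vf β e t (γ t *ᵥ v))
    (δ := ‖v‖) (K := Kc e) (ε := 0) (a := 0) (b := 2 * π)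
    (fun s _ => (mulVec_hasDeriv h v s).continuousAt.continuousWithinAt)
    (fun s _ => (mulVec_hasDeriv h v s).hasDerivWithinAt)
    (by show ‖γ 0 *ᵥ v‖ ≤ ‖v‖; rw [h.1, Matrix.one_mulVec])
    (fun s _ => by rw [add_zero]; exact norm_vf_le he0 he1 hβ s _)
  have := key t ht
  rw [gronwallBound_ε0, sub_zero] at this
  refine le_trans this ?_
  apply mul_le_mul_of_nonneg_left _ (norm_nonneg v)
  apply Real.exp_le_exp.2
  apply mul_le_mul_of_nonneg_left ht.2 (by linarith [one_le_Kc he0 he1])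

/-- Lipschitz dependence of the solution on β -/

lemma param_dist {e β β' : ℝ} (he0 : 0 ≤ e) (he1 : e < 1)
    (hβ : β ∈ Icc (0:ℝ) 1) (hβ' : β' ∈ Icc (0:ℝ) 1)
    {γ γ' : ℝ → Matrix (Fin 2) (Fin 2) ℝ} (h : IsFundSol β e γ) (h' : IsFundSol β' e γ')
    (v : Fin 2 → ℝ) :
    dist (γ (2 * π) *ᵥ v) (γ' (2 * π) *ᵥ v) ≤
      gronwallBound 0 (Real.toNNReal (Kc e))
        (0 + |β - β'| * (‖v‖ * Real.exp (Kc e * (2 * π)) / (1 - e))) (2 * π - 0) := by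
  have h1e : (0:ℝ) < 1 - e := by linarith
  set Bv := ‖v‖ * Real.exp (Kc e * (2 * π)) with hBv
  have hBv0 : 0 ≤ Bv := by positivity
  apply dist_le_of_approx_trajectories_ODE (v := vf β e)
    (f' := fun t => vf β e t (γ t *ᵥ v)) (g' := fun t => vf β' e t (γ' t *ᵥ v))
    (fun t => vf_lip he0 he1 hβ t)
    (fun s _ => (mulVec_hasDeriv h v s).continuousAt.continuousWithinAt)
    (fun s _ => (mulVec_hasDeriv h v s).hasDerivWithinAt)
    (fun s _ => by rw [dist_self])
    (fun s _ => (mulVec_hasDeriv h' v s).continuousAt.continuousWithinAt)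
    (fun s _ => (mulVec_hasDeriv h' v s).hasDerivWithinAt)
    _
    (by show dist (γ 0 *ᵥ v) (γ' 0 *ᵥ v) ≤ 0; rw [h.1, h'.1, dist_self])
    _ (right_mem_Icc.2 (by positivity))
  intro s hs
  set y := γ' s *ᵥ v with hy
  have hyb : ‖y‖ ≤ Bv := sol_norm_bound he0 he1 hβ' h' v ⟨hs.1, hs.2.le⟩
  have hε0 : (0:ℝ) ≤ |β - β'| * (Bv / (1 - e)) := by positivity
  rw [dist_pi_le_iff hε0]
  intro i
  have hden := den_pos he0 he1 s
  have hdlb := den_lb he0 s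
  fin_cases i
  · show dist (-(cf β' e s) * y 1) (-(cf β e s) * y 1) ≤ _
    rw [Real.dist_eq]
    have heq : -(cf β' e s) * y 1 - -(cf β e s) * y 1 = ((β' - β) / (1 + e * Real.cos s)) * y 1 := by
      simp only [cf]
      field_simp
      ring
    rw [heq, abs_mul, abs_div]
    have h1 : |β' - β| / |1 + e * Real.cos s| ≤ |β - β'| / (1 - e) := by
      rw [abs_sub_comm, abs_of_pos hden]
      exact div_le_div_of_nonneg_left (abs_nonneg _) h1e hdlb |>.trans_eq rfl |> (fun h => h)
    have h2 : |y 1| ≤ Bv := le_trans (norm_le_pi_norm y 1) hyb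
    calc |β' - β| / |1 + e * Real.cos s| * |y 1|
        ≤ |β - β'| / (1 - e) * Bv := by
          apply mul_le_mul h1 h2 (abs_nonneg _)
          positivity
    _ = |β - β'| * (Bv / (1 - e)) := by ring
  · show dist (y 0) (y 0) ≤ _
    rw [dist_self]
    exact hε0

lemma trace_continuousOn {e : ℝ} (he0 : 0 ≤ e) (he1 : e < 1)
    {γ : ℝ → ℝ → Matrix (Fin 2) (Fin 2) ℝ}
    (hγ : ∀ β ∈ Icc (0:ℝ) 1, IsFundSol β e (γ β)) :
    ContinuousOn (fun β => Matrix.trace (γ β (2 * π))) (Icc (0:ℝ) 1) := by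
  have hKc := one_le_Kc he0 he1
  have hKne : (Real.toNNReal (Kc e) : ℝ) ≠ 0 := by
    rw [Real.coe_toNNReal _ (by linarith)]; intro hc; rw [hc] at hKc; linarith
  set L : ℝ := 2 * ((‖(![1,0] : Fin 2 → ℝ)‖ ⊔ ‖(![0,1] : Fin 2 → ℝ)‖) *
      Real.exp (Kc e * (2 * π)) / (1 - e) / (Real.toNNReal (Kc e) : ℝ) *
      (Real.exp ((Real.toNNReal (Kc e) : ℝ) * (2 * π - 0)) - 1)) with hL
  -- key distance estimate
  have key : ∀ β ∈ Icc (0:ℝ) 1, ∀ β' ∈ Icc (0:ℝ) 1,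
      dist (Matrix.trace (γ β (2 * π))) (Matrix.trace (γ β' (2 * π))) ≤ L * dist β β' := by
    intro β hβ β' hβ'
    have hbound : ∀ v : Fin 2 → ℝ,
        dist (γ β (2 * π) *ᵥ v) (γ β' (2 * π) *ᵥ v) ≤
          |β - β'| * (‖v‖ * Real.exp (Kc e * (2 * π)) / (1 - e) / (Real.toNNReal (Kc e) : ℝ) *
            (Real.exp ((Real.toNNReal (Kc e) : ℝ) * (2 * π - 0)) - 1)) := by
      intro v
      refine le_trans (param_dist he0 he1 hβ hβ' (hγ β hβ) (hγ β' hβ') v) ?_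
      rw [gronwallBound_of_K_ne_0 hKne]
      apply le_of_eq
      show 0 * Real.exp _ + _ = _
      ring
    have comp : ∀ (v : Fin 2 → ℝ) (i : Fin 2),
        |(γ β (2 * π) *ᵥ v) i - (γ β' (2 * π) *ᵥ v) i| ≤
          |β - β'| * (‖v‖ * Real.exp (Kc e * (2 * π)) / (1 - e) / (Real.toNNReal (Kc e) : ℝ) *
            (Real.exp ((Real.toNNReal (Kc e) : ℝ) * (2 * π - 0)) - 1)) := by
      intro v i
      refine le_trans ?_ (hbound v)
      rw [← Real.dist_eq]
      exact dist_le_pi_dist _ _ i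
    have htr : ∀ b, Matrix.trace (γ b (2 * π)) =
        (γ b (2 * π) *ᵥ ![1,0]) 0 + (γ b (2 * π) *ᵥ ![0,1]) 1 := by
      intro b
      rw [Matrix.trace_fin_two]
      simp [Matrix.mulVec, dotProduct, Fin.sum_univ_two]
    rw [Real.dist_eq, Real.dist_eq, htr, htr]
    have h0 := comp ![1,0] 0
    have h1 := comp ![0,1] 1
    have habs : |(γ β (2 * π) *ᵥ ![1,0]) 0 + (γ β (2 * π) *ᵥ ![0,1]) 1 -
        ((γ β' (2 * π) *ᵥ ![1,0]) 0 + (γ β' (2 * π) *ᵥ ![0,1]) 1)| ≤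
        |(γ β (2 * π) *ᵥ ![1,0]) 0 - (γ β' (2 * π) *ᵥ ![1,0]) 0| +
        |(γ β (2 * π) *ᵥ ![0,1]) 1 - (γ β' (2 * π) *ᵥ ![0,1]) 1| := by
      rw [show (γ β (2 * π) *ᵥ ![1,0]) 0 + (γ β (2 * π) *ᵥ ![0,1]) 1 -
        ((γ β' (2 * π) *ᵥ ![1,0]) 0 + (γ β' (2 * π) *ᵥ ![0,1]) 1) =
        ((γ β (2 * π) *ᵥ ![1,0]) 0 - (γ β' (2 * π) *ᵥ ![1,0]) 0) +
        ((γ β (2 * π) *ᵥ ![0,1]) 1 - (γ β' (2 * π) *ᵥ ![0,1]) 1) by ring]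
      exact abs_add_le _ _
    have hK0 : (0:ℝ) < (Real.toNNReal (Kc e) : ℝ) := by
      rw [Real.coe_toNNReal _ (by linarith)]; linarith
    have hY : (0:ℝ) ≤ Real.exp ((Real.toNNReal (Kc e) : ℝ) * (2 * π - 0)) - 1 := by
      have hx : (0:ℝ) ≤ (Real.toNNReal (Kc e) : ℝ) * (2 * π - 0) := by
        have := Real.pi_pos
        have := NNReal.coe_nonneg (Real.toNNReal (Kc e))
        nlinarith
      linarith [Real.add_one_le_exp ((Real.toNNReal (Kc e) : ℝ) * (2 * π - 0))]
    have h1e : (0:ℝ) < 1 - e := by linarith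
    have key0 : |β - β'| * (‖(![1,0] : Fin 2 → ℝ)‖ * Real.exp (Kc e * (2 * π)) / (1 - e) /
          (Real.toNNReal (Kc e) : ℝ) *
          (Real.exp ((Real.toNNReal (Kc e) : ℝ) * (2 * π - 0)) - 1)) ≤
        |β - β'| * ((‖(![1,0] : Fin 2 → ℝ)‖ ⊔ ‖(![0,1] : Fin 2 → ℝ)‖) *
          Real.exp (Kc e * (2 * π)) / (1 - e) / (Real.toNNReal (Kc e) : ℝ) *
          (Real.exp ((Real.toNNReal (Kc e) : ℝ) * (2 * π - 0)) - 1)) := by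
      gcongr
      exact le_max_left _ _
    have key1 : |β - β'| * (‖(![0,1] : Fin 2 → ℝ)‖ * Real.exp (Kc e * (2 * π)) / (1 - e) /
          (Real.toNNReal (Kc e) : ℝ) *
          (Real.exp ((Real.toNNReal (Kc e) : ℝ) * (2 * π - 0)) - 1)) ≤
        |β - β'| * ((‖(![1,0] : Fin 2 → ℝ)‖ ⊔ ‖(![0,1] : Fin 2 → ℝ)‖) *
          Real.exp (Kc e * (2 * π)) / (1 - e) / (Real.toNNReal (Kc e) : ℝ) *
          (Real.exp ((Real.toNNReal (Kc e) : ℝ) * (2 * π - 0)) - 1)) := by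
      gcongr
      exact le_max_right _ _
    rw [hL]
    calc _ ≤ _ := habs
    _ ≤ _ := add_le_add (le_trans h0 key0) (le_trans h1 key1)
    _ ≤ _ := by apply le_of_eq; ring
  -- conclude continuity
  have : LipschitzOnWith (Real.toNNReal L) (fun β => Matrix.trace (γ β (2 * π))) (Icc 0 1) := by
    rw [lipschitzOnWith_iff_dist_le_mul]
    intro a ha b hb
    refine le_trans (key a ha b hb) ?_
    apply mul_le_mul_of_nonneg_right _ dist_nonneg
    exact Real.le_coe_toNNReal L
  exact this.continuousOn

lemma CH2 (M : Matrix (Fin 2) (Fin 2) ℝ) :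
    M * M = (Matrix.trace M) • M - (M.det) • (1 : Matrix (Fin 2) (Fin 2) ℝ) := by
  ext i j
  fin_cases i <;> fin_cases j <;>
    simp [Matrix.mul_apply, Fin.sum_univ_two, Matrix.trace_fin_two, Matrix.det_fin_two,
      Matrix.smul_apply, Matrix.sub_apply, Matrix.one_apply] <;> ring

/-- power formula for a 2×2 matrix with det 1, |trace| < 2. -/

lemma pow_bounded {M : Matrix (Fin 2) (Fin 2) ℝ} (hdet : M.det = 1)
    (htr : |Matrix.trace M| < 2) :
    ∃ C : ℝ, ∀ n : ℕ, ‖M ^ n‖ ≤ C := by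
  set τ := Matrix.trace M with hτ
  set a : ℝ := τ / 2 with ha
  have ha1 : |a| < 1 := by rw [ha, abs_div]; simp [abs_of_pos]; linarith [abs_lt.1 htr]
  have ha1' := abs_lt.1 ha1
  set s : ℝ := Real.sqrt (1 - a ^ 2) with hs
  have hs2 : s ^ 2 = 1 - a ^ 2 := Real.sq_sqrt (by nlinarith)
  have hspos : 0 < s := Real.sqrt_pos.2 (by nlinarith)
  set θ : ℝ := Real.arccos a with hθ
  have hcos : Real.cos θ = a := Real.cos_arccos ha1'.1.le ha1'.2.le
  have hsin : Real.sin θ = s := by rw [hθ, Real.sin_arccos]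
  have hform : ∀ n : ℕ, M ^ n = (Real.sin ((n : ℝ) * θ) / s) • M +
      (-(Real.sin (((n : ℝ) - 1) * θ)) / s) • (1 : Matrix (Fin 2) (Fin 2) ℝ) := by
    intro n
    induction n with
    | zero =>
      simp only [pow_zero, Nat.cast_zero, zero_mul, Real.sin_zero, zero_div, zero_smul, zero_add,
        zero_sub, neg_mul, one_mul, Real.sin_neg, hsin, neg_neg]
      rw [div_self hspos.ne']
      rw [one_smul]
    | succ n ih =>
      have e1 : ((n + 1 : ℕ) : ℝ) * θ = (n : ℝ) * θ + θ := by push_cast; ring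
      have e2 : (((n + 1 : ℕ) : ℝ) - 1) * θ = (n : ℝ) * θ := by push_cast; ring
      have e3 : ((n : ℝ) - 1) * θ = (n : ℝ) * θ - θ := by ring
      have hc1 : Real.sin (((n + 1 : ℕ) : ℝ) * θ) / s =
          (Real.sin ((n : ℝ) * θ) / s) * τ + -(Real.sin (((n : ℝ) - 1) * θ)) / s := by
        rw [e1, Real.sin_add, e3, Real.sin_sub, hcos]
        have hτ2 : τ = 2 * a := by rw [ha]; ring
        rw [hτ2]
        field_simp
        ring
      have hc2 : -(Real.sin ((((n + 1 : ℕ) : ℝ) - 1) * θ)) / s =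
          -(Real.sin ((n : ℝ) * θ) / s) := by rw [e2]; ring
      calc M ^ (n + 1) = ((Real.sin ((n : ℝ) * θ) / s) • M +
            (-(Real.sin (((n : ℝ) - 1) * θ)) / s) • 1) * M := by rw [pow_succ, ih]
      _ = (Real.sin ((n : ℝ) * θ) / s) • (M * M) +
            (-(Real.sin (((n : ℝ) - 1) * θ)) / s) • M := by
            rw [Matrix.add_mul, Matrix.smul_mul, Matrix.smul_mul, Matrix.one_mul]
      _ = (Real.sin ((n : ℝ) * θ) / s) • (τ • M - (1:ℝ) • 1) +
            (-(Real.sin (((n : ℝ) - 1) * θ)) / s) • M := by rw [CH2, hdet, ← hτ]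
      _ = ((Real.sin ((n : ℝ) * θ) / s) * τ + -(Real.sin (((n : ℝ) - 1) * θ)) / s) • M +
            (-(Real.sin ((n : ℝ) * θ) / s)) • (1 : Matrix (Fin 2) (Fin 2) ℝ) := by
            module
      _ = _ := by rw [hc1, hc2]
  refine ⟨(‖M‖ + ‖(1 : Matrix (Fin 2) (Fin 2) ℝ)‖) / s, fun n => ?_⟩
  rw [hform n]
  have habs : ∀ u : ℝ, |Real.sin u / s| ≤ 1 / s := by
    intro u
    rw [abs_div, abs_of_pos hspos]
    apply (div_le_div_iff_of_pos_right hspos).2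
    exact abs_le.2 ⟨Real.neg_one_le_sin u, Real.sin_le_one u⟩
  calc ‖(Real.sin ((n : ℝ) * θ) / s) • M +
      (-(Real.sin (((n : ℝ) - 1) * θ)) / s) • (1 : Matrix (Fin 2) (Fin 2) ℝ)‖
      ≤ ‖(Real.sin ((n : ℝ) * θ) / s) • M‖ +
        ‖(-(Real.sin (((n : ℝ) - 1) * θ)) / s) • (1 : Matrix (Fin 2) (Fin 2) ℝ)‖ := norm_add_le _ _
  _ ≤ (1 / s) * ‖M‖ + (1 / s) * ‖(1 : Matrix (Fin 2) (Fin 2) ℝ)‖ := by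
      rw [norm_smul, norm_smul]
      apply add_le_add
      · apply mul_le_mul_of_nonneg_right _ (norm_nonneg _)
        rw [Real.norm_eq_abs]
        exact habs _
      · apply mul_le_mul_of_nonneg_right _ (norm_nonneg _)
        rw [Real.norm_eq_abs, neg_div]
        rw [abs_neg]
        exact habs _
  _ = (‖M‖ + ‖(1 : Matrix (Fin 2) (Fin 2) ℝ)‖) / s := by ring

lemma eig_pair {M : Matrix (Fin 2) (Fin 2) ℝ} (hdet : M.det = 1)
    (htr : |Matrix.trace M| < 2) :
    ∃ μ : ℂ, μ.im ≠ 0 ∧ ‖μ‖ = 1 ∧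
      ∀ z : ℂ, Matrix.det (M.map (fun x => (x : ℂ)) - z • 1) = 0 ↔
        z = μ ∨ z = (starRingEnd ℂ) μ := by
  set τ := Matrix.trace M with hτ
  set a : ℝ := τ / 2 with ha
  have ha1' : -1 < a ∧ a < 1 := by
    constructor <;> [nlinarith [abs_lt.1 htr |>.1]; nlinarith [abs_lt.1 htr |>.2]]
  set s : ℝ := Real.sqrt (1 - a ^ 2) with hs
  have hs2 : s ^ 2 = 1 - a ^ 2 := Real.sq_sqrt (by nlinarith [ha1'.1, ha1'.2])
  have hspos : 0 < s := Real.sqrt_pos.2 (by nlinarith [ha1'.1, ha1'.2])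
  refine ⟨⟨a, s⟩, by simpa using hspos.ne', ?_, ?_⟩
  · rw [Complex.norm_def, Complex.normSq_mk]
    rw [show a * a + s * s = 1 by nlinarith]
    exact Real.sqrt_one
  · intro z
    have hconj : (starRingEnd ℂ) (⟨a, s⟩ : ℂ) = ⟨a, -s⟩ := by
      apply Complex.ext <;> simp
    have hdetC : ((M 0 0 : ℂ)) * (M 1 1 : ℂ) - (M 0 1 : ℂ) * (M 1 0 : ℂ) = 1 := by
      rw [Matrix.det_fin_two] at hdet
      exact_mod_cast congrArg (fun x : ℝ => (x : ℂ)) hdet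
    have htrC : ((M 0 0 : ℂ)) + (M 1 1 : ℂ) = 2 * (a : ℂ) := by
      have : M 0 0 + M 1 1 = 2 * a := by
        rw [ha, hτ, Matrix.trace_fin_two]; ring
      exact_mod_cast congrArg (fun x : ℝ => (x : ℂ)) this
    have hsum : (⟨a, s⟩ : ℂ) + (starRingEnd ℂ) (⟨a, s⟩ : ℂ) = 2 * (a : ℂ) := by
      rw [hconj]
      apply Complex.ext <;> simp <;> ring
    have hprod : (⟨a, s⟩ : ℂ) * (starRingEnd ℂ) (⟨a, s⟩ : ℂ) = 1 := by
      rw [hconj]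
      apply Complex.ext
      · simp [Complex.mul_re]
        nlinarith
      · simp [Complex.mul_im]
        ring
    have hdet2 : Matrix.det (M.map (fun x => (x : ℂ)) - z • 1) =
        ((M 0 0 : ℂ) - z) * ((M 1 1 : ℂ) - z) - (M 0 1 : ℂ) * (M 1 0 : ℂ) := by
      rw [Matrix.det_fin_two]
      simp [Matrix.map_apply, Matrix.sub_apply, Matrix.smul_apply, Matrix.one_apply]
      try ring
    have hfactor : ((M 0 0 : ℂ) - z) * ((M 1 1 : ℂ) - z) - (M 0 1 : ℂ) * (M 1 0 : ℂ) =
        (z - ⟨a, s⟩) * (z - (starRingEnd ℂ) (⟨a, s⟩ : ℂ)) := by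
      linear_combination hdetC - z * htrC - hprod + z * hsum
    rw [hdet2, hfactor, mul_eq_zero, sub_eq_zero, sub_eq_zero]
/-- `det (M + 1) = 2 + tr M` for a 2×2 matrix of determinant one. -/
lemma det_add_one {M : Matrix (Fin 2) (Fin 2) ℝ} (h : M.det = 1) :
    (M + 1).det = 2 + Matrix.trace M := by
  rw [Matrix.det_fin_two] at h
  rw [Matrix.det_fin_two, Matrix.trace_fin_two]
  simp only [Matrix.add_apply, Matrix.one_apply]
  norm_num
  linear_combination h

end Stmt15

open Stmt15 Set

/-- in Regions I and III (i.e. `β ∈ (0,β₁) ∪ (β₂,1)` where `β₁ < β₂` are the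
two `-1`-degenerate values), the eigenvalues of the monodromy matrix are a non-real complex
conjugate pair on the unit circle, `|trace| < 2`, and the matrix is linearly stable. -/
theorem stmt_15 (e : ℝ) (he : e ∈ Set.Ico (0 : ℝ) 1)
    (β₁ β₂ : ℝ) (hβ₁ : β₁ ∈ Set.Ioo (0 : ℝ) 1) (hβ₂ : β₂ ∈ Set.Ioo (0 : ℝ) 1)
    (hlt : β₁ < β₂)
    (γ : ℝ → ℝ → Matrix (Fin 2) (Fin 2) ℝ)
    (hγ : ∀ β ∈ Set.Icc (0 : ℝ) 1, IsFundSol β e (γ β))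
    (hdeg : ∀ β ∈ Set.Icc (0 : ℝ) 1,
      (Matrix.det (γ β (2 * π) + 1) = 0 ↔ β = β₁ ∨ β = β₂)) :
    ∀ β ∈ Set.Ioo (0 : ℝ) β₁ ∪ Set.Ioo β₂ 1,
      (∃ μ : ℂ, μ.im ≠ 0 ∧ ‖μ‖ = 1 ∧
        ∀ z : ℂ, Matrix.det ((γ β (2 * π)).map (fun x => (x : ℂ)) - z • 1) = 0 ↔
          z = μ ∨ z = (starRingEnd ℂ) μ) ∧
      |Matrix.trace (γ β (2 * π))| < 2 ∧
      ∃ C : ℝ, ∀ n : ℕ, ‖γ β (2 * π) ^ n‖ ≤ C := by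
  obtain ⟨he0, he1⟩ := he
  intro β hβ
  have hβ01 : β ∈ Ioo (0:ℝ) 1 := by
    rcases hβ with h | h
    · exact ⟨h.1, lt_trans h.2 hβ₁.2⟩
    · exact ⟨lt_trans hβ₂.1 h.1, h.2⟩
  have hβIcc : β ∈ Icc (0:ℝ) 1 := ⟨hβ01.1.le, hβ01.2.le⟩
  set τf : ℝ → ℝ := fun b => Matrix.trace (γ b (2 * π)) with hτf
  have hcont : ContinuousOn τf (Icc (0:ℝ) 1) := trace_continuousOn he0 he1 hγ
  -- value of the trace at the degenerate parameters
  have hdetval : ∀ b ∈ Icc (0:ℝ) 1, (γ b (2 * π) + 1).det = 2 + τf b := by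
    intro b hb
    exact det_add_one (det_one (hγ b hb) _)
  have hτβ₁ : τf β₁ = -2 := by
    have hmem : β₁ ∈ Icc (0:ℝ) 1 := ⟨hβ₁.1.le, hβ₁.2.le⟩
    have := (hdeg β₁ hmem).2 (Or.inl rfl)
    rw [hdetval β₁ hmem] at this
    linarith
  have hτβ₂ : τf β₂ = -2 := by
    have hmem : β₂ ∈ Icc (0:ℝ) 1 := ⟨hβ₂.1.le, hβ₂.2.le⟩
    have := (hdeg β₂ hmem).2 (Or.inr rfl)
    rw [hdetval β₂ hmem] at this
    linarith
  have hτ0 : τf 0 = 2 := trace_at_zero he0 he1 (hγ 0 ⟨le_refl _, by norm_num⟩)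
  have hτ1 : τf 1 = 2 := trace_at_one he0 he1 (hγ 1 ⟨by norm_num, le_refl _⟩)
  have hne2 : ∀ b ∈ Ioo (0:ℝ) 1, τf b ≠ 2 := fun b hb =>
    trace_ne_two he0 he1 hb (hγ b ⟨hb.1.le, hb.2.le⟩)
  have hnem2 : ∀ b ∈ Icc (0:ℝ) 1, b ≠ β₁ → b ≠ β₂ → τf b ≠ -2 := by
    intro b hb hb1 hb2 hc
    have : (γ b (2 * π) + 1).det = 0 := by rw [hdetval b hb, hc]; ring
    rcases (hdeg b hb).1 this with h | h
    exacts [hb1 h, hb2 h]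
  -- the central estimate : |trace| < 2
  have habs : |τf β| < 2 := by
    rw [abs_lt]
    constructor
    · -- τf β > -2
      by_contra hc
      push_neg at hc
      have hβne1 : β ≠ β₁ := by
        rcases hβ with h | h
        · exact ne_of_lt h.2
        · have : β₁ < β := lt_trans hlt h.1
          exact ne_of_gt this
      have hβne2 : β ≠ β₂ := by
        rcases hβ with h | h
        · exact ne_of_lt (lt_trans h.2 hlt)
        · exact ne_of_gt h.1
      have hlt2 : τf β < -2 :=
        lt_of_le_of_ne hc (hnem2 β hβIcc hβne1 hβne2)
      rcases hβ with h | h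
      · -- region I : find a -2 value in (0, β)
        obtain ⟨c, hc1, hc2⟩ := intermediate_value_Ioo' (le_of_lt hβ01.1)
          (hcont.mono (fun u hu => ⟨hu.1, le_trans hu.2 hβ01.2.le⟩))
          (show (-2:ℝ) ∈ Ioo (τf β) (τf 0) by rw [hτ0]; exact ⟨hlt2, by norm_num⟩)
        have hcIcc : c ∈ Icc (0:ℝ) 1 := ⟨hc1.1.le, le_trans hc1.2.le hβ01.2.le⟩
        exact hnem2 c hcIcc (ne_of_lt (lt_trans hc1.2 h.2))
          (ne_of_lt (lt_trans (lt_trans hc1.2 h.2) hlt)) hc2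
      · -- region III : find a -2 value in (β, 1)
        obtain ⟨c, hc1, hc2⟩ := intermediate_value_Ioo (le_of_lt hβ01.2)
          (hcont.mono (fun u hu => ⟨le_trans hβ01.1.le hu.1, hu.2⟩))
          (show (-2:ℝ) ∈ Ioo (τf β) (τf 1) by rw [hτ1]; exact ⟨hlt2, by norm_num⟩)
        have hcIcc : c ∈ Icc (0:ℝ) 1 := ⟨le_trans hβ01.1.le hc1.1.le, hc1.2.le⟩
        have hcβ₂ : β₂ < c := lt_trans h.1 hc1.1
        exact hnem2 c hcIcc (ne_of_gt (lt_trans hlt hcβ₂)) (ne_of_gt hcβ₂) hc2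
    · -- τf β < 2
      by_contra hc
      push_neg at hc
      have hlt2 : 2 < τf β := lt_of_le_of_ne hc (Ne.symm (hne2 β hβ01))
      rcases hβ with h | h
      · -- region I : find a value 2 in (β, β₁)
        obtain ⟨c, hc1, hc2⟩ := intermediate_value_Ioo' (le_of_lt h.2)
          (hcont.mono (fun u hu =>
            ⟨le_trans hβ01.1.le hu.1, le_trans hu.2 hβ₁.2.le⟩))
          (show (2:ℝ) ∈ Ioo (τf β₁) (τf β) by rw [hτβ₁]; exact ⟨by linarith, hlt2⟩)
        exact hne2 c ⟨lt_trans hβ01.1 hc1.1, lt_trans hc1.2 hβ₁.2⟩ hc2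
      · -- region III : find a value 2 in (β₂, β)
        obtain ⟨c, hc1, hc2⟩ := intermediate_value_Ioo (le_of_lt h.1)
          (hcont.mono (fun u hu =>
            ⟨le_trans hβ₂.1.le hu.1, le_trans hu.2 hβ01.2.le⟩))
          (show (2:ℝ) ∈ Ioo (τf β₂) (τf β) by rw [hτβ₂]; exact ⟨by linarith, hlt2⟩)
        exact hne2 c ⟨lt_trans hβ₂.1 hc1.1, lt_trans hc1.2 hβ01.2⟩ hc2
  have hdet : (γ β (2 * π)).det = 1 := det_one (hγ β hβIcc) _
  exact ⟨eig_pair hdet habs, habs, pow_bounded hdet habs⟩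
end
end
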